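/- arXiv:2004.00340 — 5 statements merged into one kernel-verified Lean document; each statement's English description precedes it below -/
import Mathlib

section
/- Garsia–Rodemich–Rumsey moment estimate, pathwise form (first inequality of the paper's Lemma 4.1): There exists an absolute constant C > 0 such that for every probability space (Ω, F, P), every continuous ℝ^d-valued stochastic process Y on a compact interval [a,b] ⊂ ℝ, and all real numbers γ > 0, p ≥ max(1, γ), q > 0 with pq > 2, one has E[ sup_{t∈[a,b]} |Y_t − Y_a|^γ ] ≤ ( C · pq/(pq−2) · (b−a)^{q−2/p} )^γ · E[ ( ∫_a^b ∫_a^b |Y_s − Y_t|^p / |t−s|^{pq} ds dt )^{γ/p} ], where both sides are allowed to take the value +∞. -/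
open MeasureTheory Set Filter
open scoped ENNReal NNReal

section GRRaux

variable {E : Type*} [NormedAddCommGroup E]

/-- Joint measurability of the GRR kernel. -/
private lemma grr_meas2 (f : ℝ → E) (hf : Continuous f) {p' q' : ℝ} (hp' : 0 ≤ p')
    (hq' : 0 ≤ q') :
    Measurable fun ts : ℝ × ℝ => ENNReal.ofReal (‖f ts.1 - f ts.2‖ ^ p' / |ts.2 - ts.1| ^ q') := by
  apply Measurable.ennreal_ofReal
  apply Measurable.div
  · exact ((Real.continuous_rpow_const hp').comp
      ((hf.comp continuous_fst).sub (hf.comp continuous_snd)).norm).measurable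
  · exact ((Real.continuous_rpow_const hq').comp
      ((continuous_snd.sub continuous_fst).abs)).measurable

private lemma grr_meas1 (f : ℝ → E) (hf : Continuous f) {p' q' : ℝ} (hp' : 0 ≤ p')
    (hq' : 0 ≤ q') (e : ℝ) :
    Measurable fun s : ℝ => ENNReal.ofReal (‖f e - f s‖ ^ p' / |s - e| ^ q') := by
  apply Measurable.ennreal_ofReal
  apply Measurable.div
  · exact ((Real.continuous_rpow_const hp').comp ((continuous_const.sub hf).norm)).measurable
  · exact ((Real.continuous_rpow_const hq').comp
      ((continuous_id.sub continuous_const).abs)).measurable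

/-- Chebyshev-type bound. -/
private lemma grr_cheb {h : ℝ → ℝ≥0∞} (hm : Measurable h) {s : Set ℝ} (hs : MeasurableSet s)
    {M L : ℝ≥0∞} (hL0 : L ≠ 0) (hLt : L ≠ ⊤) (hint : ∫⁻ x in s, h x ≤ M) :
    volume {x | x ∈ s ∧ L < h x} ≤ M / L := by
  have h1 : {x | x ∈ s ∧ L < h x} = {x | L < h x} ∩ s := by ext x; simp [and_comm]
  calc volume {x | x ∈ s ∧ L < h x} = (volume.restrict s) {x | L < h x} := by
        rw [Measure.restrict_apply (measurableSet_lt measurable_const hm), h1]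
    _ ≤ (volume.restrict s) {x | L ≤ h x} := measure_mono (fun x (hx : L < h x) => le_of_lt hx)
    _ ≤ (∫⁻ x in s, h x) / L := meas_ge_le_lintegral_div hm.aemeasurable hL0 hLt
    _ ≤ M / L := by gcongr

/-- Pick a point in `Ioo 0 c` avoiding two bad sets. -/
private lemma grr_pick {c : ℝ} (hc : 0 < c) {h1 h2 : ℝ → ℝ≥0∞} {L1 L2 : ℝ≥0∞}
    (hb : volume {x | x ∈ Ioo 0 c ∧ L1 < h1 x} + volume {x | x ∈ Ioo 0 c ∧ L2 < h2 x}
      < ENNReal.ofReal c) :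
    ∃ v, v ∈ Ioo 0 c ∧ h1 v ≤ L1 ∧ h2 v ≤ L2 := by
  by_contra hcon
  push_neg at hcon
  have hsub : Ioo 0 c ⊆ {x | x ∈ Ioo 0 c ∧ L1 < h1 x} ∪ {x | x ∈ Ioo 0 c ∧ L2 < h2 x} := by
    intro x hx
    rcases le_or_gt (h1 x) L1 with h | h
    · exact Or.inr ⟨hx, hcon x hx h⟩
    · exact Or.inl ⟨hx, h⟩
  have hle := (measure_mono (μ := (volume : Measure ℝ)) hsub).trans (measure_union_le _ _)
  rw [Real.volume_Ioo, sub_zero] at hle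
  exact absurd (hle.trans_lt hb) (lt_irrefl _)

/-- Reflection invariance of set-lintegrals over `Icc 0 T`. -/
private lemma grr_reflect (T : ℝ) (h : ℝ → ℝ≥0∞) (hm : Measurable h) :
    ∫⁻ s in Icc 0 T, h (T - s) = ∫⁻ s in Icc 0 T, h s := by
  have hmp : MeasurePreserving (fun x : ℝ => T - x) volume volume :=
    (measurePreserving_add_left volume T).comp (Measure.measurePreserving_neg volume)
  have hpre : (fun x : ℝ => T - x) ⁻¹' (Icc 0 T) = Icc 0 T := by
    ext x
    simp only [mem_preimage, mem_Icc]
    constructor <;> (rintro ⟨h1, h2⟩; constructor <;> linarith)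
  have := (hmp.restrict_preimage (measurableSet_Icc (a := (0:ℝ)) (b := T))).lintegral_comp hm
  rwa [hpre] at this

/-- Translation invariance of set-lintegrals. -/
private lemma grr_translate (a c : ℝ) (h : ℝ → ℝ≥0∞) (hm : Measurable h) :
    ∫⁻ s in Icc 0 (c - a), h (s + a) = ∫⁻ s in Icc a c, h s := by
  have hmp := measurePreserving_add_right (volume : Measure ℝ) a
  have hpre : (fun x : ℝ => x + a) ⁻¹' (Icc a c) = Icc 0 (c - a) := by
    ext x
    simp only [mem_preimage, mem_Icc]
    constructor <;> (rintro ⟨h1, h2⟩; constructor <;> linarith)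
  have := (hmp.restrict_preimage (measurableSet_Icc (a := a) (b := c))).lintegral_comp hm
  rwa [hpre] at this

/-- Bound on the geometric-type sum ratio. -/
private lemma grr_geom {q θ : ℝ} (hq : 0 < q) (hθ : 0 < θ) :
    ((2:ℝ) ^ (-(1/q))) ^ θ * (1 - ((2:ℝ) ^ (-(1/q))) ^ θ)⁻¹ ≤ 2 * q / θ := by
  have hlog : (0:ℝ) < Real.log 2 := Real.log_pos one_lt_two
  set u := (θ / q) * Real.log 2 with hu
  have hu0 : 0 < u := by positivity
  have hρdef : ((2:ℝ) ^ (-(1/q))) ^ θ = Real.exp (-u) := by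
    rw [← Real.rpow_mul (by norm_num : (0:ℝ) ≤ 2), Real.rpow_def_of_pos (by norm_num : (0:ℝ) < 2)]
    congr 1
    rw [hu]
    ring
  rw [hρdef]
  set ρ := Real.exp (-u) with hρ
  have hρ0 : 0 < ρ := Real.exp_pos _
  have hρ1 : ρ < 1 := by
    rw [hρ]
    apply Real.exp_lt_one_iff.mpr
    linarith
  have key : u * ρ ≤ 1 - ρ := by
    have h := Real.add_one_le_exp u
    have h2 := mul_le_mul_of_nonneg_right h hρ0.le
    rw [hρ, ← Real.exp_add, add_neg_cancel, Real.exp_zero] at h2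
    nlinarith
  have h1ρ : 0 < 1 - ρ := by linarith
  have step1 : ρ * (1 - ρ)⁻¹ ≤ 1 / u := by
    rw [← div_eq_mul_inv, div_le_div_iff₀ h1ρ hu0]
    nlinarith
  refine step1.trans ?_
  rw [div_le_div_iff₀ hu0 hθ]
  have h3 : 2 * q * u = 2 * θ * Real.log 2 := by
    rw [hu]
    field_simp
  nlinarith [Real.log_two_gt_d9]

/-- One half of the chaining argument: from a good point `t₀` down to `0`. -/
private lemma grr_half (f : ℝ → E) (hf : Continuous f) {T B p q t₀ : ℝ}
    (hT : 0 < T) (hB : 0 < B) (hp : 1 ≤ p) (hq : 0 < q) (hpq : 2 < p * q)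
    (hIint : ∫⁻ t in Icc 0 T, ∫⁻ s in Icc 0 T,
        ENNReal.ofReal (‖f t - f s‖ ^ p / |s - t| ^ (p*q)) ≤ ENNReal.ofReal B)
    (ht₀ : t₀ ∈ Ioo 0 T)
    (hI₀ : ∫⁻ s in Icc 0 T, ENNReal.ofReal (‖f t₀ - f s‖ ^ p / |s - t₀| ^ (p*q))
        ≤ ENNReal.ofReal (4*B/T)) :
    ‖f t₀ - f 0‖ ≤ 64 * (p*q/(p*q-2)) * B^(1/p) * T^(q-2/p) := by
  classical
  have hp0 : (0:ℝ) < p := lt_of_lt_of_le one_pos hp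
  have hpq0 : (0:ℝ) < p * q := by positivity
  have hθ : 0 < q - 2/p := by
    rw [sub_pos, div_lt_iff₀ hp0]
    nlinarith
  set r := (2:ℝ) ^ (-(1/q)) with hr
  have hr0 : 0 < r := Real.rpow_pos_of_pos two_pos _
  have hr1 : r < 1 := by
    apply Real.rpow_lt_one_of_one_lt_of_neg one_lt_two
    have : (0:ℝ) < 1/q := by positivity
    linarith
  have hrq : r ^ q = 1/2 := by
    rw [hr, ← Real.rpow_mul (by norm_num : (0:ℝ) ≤ 2),
      show -(1/q) * q = -1 by field_simp, Real.rpow_neg_one]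
    norm_num
  set I : ℝ → ℝ≥0∞ :=
    fun t => ∫⁻ s in Icc 0 T, ENNReal.ofReal (‖f t - f s‖ ^ p / |s - t| ^ (p*q)) with hIdef
  have hIint' : ∫⁻ t in Icc 0 T, I t ≤ ENNReal.ofReal B := hIint
  have hI₀' : I t₀ ≤ ENNReal.ofReal (4*B/T) := hI₀
  have mI : Measurable I := Measurable.lintegral_prod_right' (grr_meas2 f hf hp0.le hpq0.le)
  -- the one-step selection
  have step : ∀ u D : ℝ, 0 < u → u < D → D ≤ T → I u ≤ ENNReal.ofReal (4*B/D) →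
      ∃ v, (0 < v ∧ v < r*u) ∧ I v ≤ ENNReal.ofReal (4*B/(r*u)) ∧
        ‖f v - f u‖ ≤ (16*B/(D*(r*u)))^(1/p) * u^q := by
    intro u D hu huD hDT hIu
    have hD0 : 0 < D := hu.trans huD
    set d := r * u with hd
    have hd0 : 0 < d := mul_pos hr0 hu
    have hdu : d < u := by
      have := mul_pos (sub_pos.mpr hr1) hu
      rw [hd]; nlinarith
    have hdT : d < T := by linarith
    have hL1 : (0:ℝ) < 4*B/d := by positivity
    have hL2 : (0:ℝ) < 16*B/(D*d) := by positivity
    have hsub : Ioo 0 d ⊆ Icc 0 T := fun x hx => ⟨hx.1.le, hx.2.le.trans hdT.le⟩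
    have hbad1 : volume {x | x ∈ Ioo 0 d ∧ ENNReal.ofReal (4*B/d) < I x}
        ≤ ENNReal.ofReal (d/4) := by
      have hint : ∫⁻ x in Ioo 0 d, I x ≤ ENNReal.ofReal B :=
        (lintegral_mono_set hsub).trans hIint'
      calc volume {x | x ∈ Ioo 0 d ∧ ENNReal.ofReal (4*B/d) < I x}
          ≤ ENNReal.ofReal B / ENNReal.ofReal (4*B/d) :=
            grr_cheb mI measurableSet_Ioo (ENNReal.ofReal_pos.mpr hL1).ne'
              ENNReal.ofReal_ne_top hint
        _ = ENNReal.ofReal (B / (4*B/d)) := (ENNReal.ofReal_div_of_pos hL1).symm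
        _ = ENNReal.ofReal (d/4) := by
            rw [show B / (4*B/d) = d/4 by field_simp]
    have hker := grr_meas1 f hf hp0.le hpq0.le u
    have hbad2 : volume {x | x ∈ Ioo 0 d ∧ ENNReal.ofReal (16*B/(D*d)) <
        ENNReal.ofReal (‖f u - f x‖ ^ p / |x - u| ^ (p*q))} ≤ ENNReal.ofReal (d/4) := by
      have hint : ∫⁻ x in Ioo 0 d, ENNReal.ofReal (‖f u - f x‖ ^ p / |x - u| ^ (p*q))
          ≤ ENNReal.ofReal (4*B/D) := (lintegral_mono_set hsub).trans hIu
      calc volume {x | x ∈ Ioo 0 d ∧ ENNReal.ofReal (16*B/(D*d)) <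
            ENNReal.ofReal (‖f u - f x‖ ^ p / |x - u| ^ (p*q))}
          ≤ ENNReal.ofReal (4*B/D) / ENNReal.ofReal (16*B/(D*d)) :=
            grr_cheb hker measurableSet_Ioo (ENNReal.ofReal_pos.mpr hL2).ne'
              ENNReal.ofReal_ne_top hint
        _ = ENNReal.ofReal ((4*B/D) / (16*B/(D*d))) := (ENNReal.ofReal_div_of_pos hL2).symm
        _ = ENNReal.ofReal (d/4) := by
            rw [show (4*B/D) / (16*B/(D*d)) = d/4 by field_simp; ring]
    have hlt : volume {x | x ∈ Ioo 0 d ∧ ENNReal.ofReal (4*B/d) < I x} +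
        volume {x | x ∈ Ioo 0 d ∧ ENNReal.ofReal (16*B/(D*d)) <
          ENNReal.ofReal (‖f u - f x‖ ^ p / |x - u| ^ (p*q))} < ENNReal.ofReal d := by
      refine lt_of_le_of_lt (add_le_add hbad1 hbad2) ?_
      rw [← ENNReal.ofReal_add (by positivity) (by positivity)]
      apply ENNReal.ofReal_lt_ofReal_iff_of_nonneg (by positivity) |>.mpr
      linarith
    obtain ⟨v, hv, hIv, hfv⟩ := grr_pick hd0 hlt
    have hv0 : 0 < v := hv.1
    have hvd : v < d := hv.2
    have hvu : 0 < u - v := by linarith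
    have habs : |v - u| = u - v := by rw [abs_sub_comm, abs_of_pos hvu]
    have hreal : ‖f u - f v‖ ^ p / |v - u| ^ (p*q) ≤ 16*B/(D*d) :=
      (ENNReal.ofReal_le_ofReal_iff hL2.le).mp hfv
    have hden : (0:ℝ) < |v - u| ^ (p*q) := by
      rw [habs]; positivity
    have hnum : ‖f u - f v‖ ^ p ≤ (16*B/(D*d)) * u ^ (p*q) := by
      have h1 : ‖f u - f v‖ ^ p ≤ (16*B/(D*d)) * |v - u| ^ (p*q) :=
        (div_le_iff₀ hden).mp hreal
      refine h1.trans (mul_le_mul_of_nonneg_left ?_ hL2.le)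
      exact Real.rpow_le_rpow (abs_nonneg _) (by rw [habs]; linarith) hpq0.le
    have hroot : ‖f u - f v‖ ≤ (16*B/(D*d))^(1/p) * u^q := by
      have h2 : (‖f u - f v‖ ^ p) ^ (1/p) ≤ ((16*B/(D*d)) * u ^ (p*q)) ^ (1/p) :=
        Real.rpow_le_rpow (by positivity) hnum (by positivity)
      rw [← Real.rpow_mul (norm_nonneg _), mul_one_div, div_self hp0.ne',
        Real.rpow_one, Real.mul_rpow hL2.le (by positivity),
        ← Real.rpow_mul hu.le, show p*q*(1/p) = q by field_simp] at h2
      exact h2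
    exact ⟨v, ⟨hv0, hvd⟩, hIv, by rw [norm_sub_rev]; exact hroot⟩
  -- the invariant and the recursively chosen sequence
  let inv : ℝ × ℝ → Prop :=
    fun x => 0 < x.1 ∧ x.1 < x.2 ∧ x.2 ≤ T ∧ I x.1 ≤ ENNReal.ofReal (4*B/x.2)
  have hstep' : ∀ x : ℝ × ℝ, inv x → ∃ y : ℝ × ℝ, (inv y ∧ y.2 = r * x.1) ∧
      ‖f y.1 - f x.1‖ ≤ (16*B/(x.2*(r*x.1)))^(1/p) * (x.1)^q := by
    rintro ⟨u, D⟩ ⟨hu, huD, hDT, hIu⟩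
    obtain ⟨v, ⟨hv0, hvd⟩, hIv, hfv⟩ := step u D hu huD hDT hIu
    refine ⟨(v, r*u), ⟨⟨hv0, hvd, ?_, hIv⟩, rfl⟩, hfv⟩
    have := mul_pos (sub_pos.mpr hr1) hu
    show r * u ≤ T
    nlinarith
  choose nxt hnxt using hstep'
  let F : ℝ × ℝ → ℝ × ℝ := fun x => if h : inv x then nxt x h else x
  let S : ℕ → ℝ × ℝ := fun n => F^[n] (t₀, T)
  have hSs : ∀ n, S (n+1) = F (S n) := fun n => Function.iterate_succ_apply' F n _
  have hinv0 : inv (t₀, T) := ⟨ht₀.1, ht₀.2, le_refl T, hI₀'⟩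
  have hinvS : ∀ n, inv (S n) := by
    intro n
    induction n with
    | zero => exact hinv0
    | succ n ih =>
      rw [hSs n]
      show inv (if h : inv (S n) then nxt (S n) h else S n)
      rw [dif_pos ih]
      exact (hnxt (S n) ih).1.1
  have hFn : ∀ n, (S (n+1)).2 = r * (S n).1 ∧
      ‖f (S (n+1)).1 - f (S n).1‖ ≤ (16*B/((S n).2*(r*(S n).1)))^(1/p) * ((S n).1)^q := by
    intro n
    have he : S (n+1) = nxt (S n) (hinvS n) := by
      rw [hSs n]
      show (if h : inv (S n) then nxt (S n) h else S n) = _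
      rw [dif_pos (hinvS n)]
    rw [he]
    exact ⟨(hnxt (S n) (hinvS n)).1.2, (hnxt (S n) (hinvS n)).2⟩
  have hD0 : ∀ n, (S n).2 ≤ r^n * T := by
    intro n
    induction n with
    | zero =>
      have h0 : (S 0).2 = T := rfl
      rw [h0, pow_zero, one_mul]
    | succ n ih =>
      have h2 := (hinvS n).2.1
      calc (S (n+1)).2 = r * (S n).1 := (hFn n).1
        _ ≤ r * (S n).2 := mul_le_mul_of_nonneg_left h2.le hr0.le
        _ ≤ r * (r^n * T) := mul_le_mul_of_nonneg_left ih hr0.le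
        _ = r^(n+1) * T := by ring
  set θ := q - 2/p with hθdef
  set ρ := r ^ θ with hρdef
  have hρ0 : 0 < ρ := Real.rpow_pos_of_pos hr0 θ
  have hρ1 : ρ < 1 := Real.rpow_lt_one hr0.le hr1 hθ
  have hstepbd : ∀ n, ‖f ((S (n+1)).1) - f ((S n).1)‖
      ≤ (2*(16*B)^(1/p)*T^θ) * ρ^(n+1) := by
    intro n
    obtain ⟨hd2, hnb⟩ := hFn n
    have hu0 : 0 < (S n).1 := (hinvS n).1
    have huD : (S n).1 < (S n).2 := (hinvS n).2.1
    set u := (S n).1 with hu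
    set D := (S n).2 with hD
    set d' := r * u with hd'
    have hd'0 : 0 < d' := mul_pos hr0 hu0
    have hd'D : d' ≤ D := by
      have := mul_pos (sub_pos.mpr hr1) hu0
      rw [hd']; nlinarith
    have h16 : (0:ℝ) < 16*B := by positivity
    have hDpos : 0 < D := hu0.trans huD
    have key1 : (16*B/(D*d'))^(1/p) ≤ (16*B/(d'*d'))^(1/p) := by
      apply Real.rpow_le_rpow (div_nonneg h16.le (mul_pos hDpos hd'0).le) ?_ (by positivity)
      rw [div_le_div_iff₀ (mul_pos hDpos hd'0) (mul_pos hd'0 hd'0)]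
      nlinarith [mul_le_mul_of_nonneg_left (mul_le_mul_of_nonneg_right hd'D hd'0.le) h16.le]
    have key2 : u ^ q = 2 * d' ^ q := by
      rw [hd', Real.mul_rpow hr0.le hu0.le, hrq]
      ring
    have hDub : d' ≤ r^(n+1) * T := by
      calc d' = (S (n+1)).2 := hd2.symm
        _ ≤ r^(n+1) * T := hD0 (n+1)
    have hsq : d' * d' = d' ^ (2:ℝ) := by
      rw [show (2:ℝ) = ((2:ℕ):ℝ) by norm_num, Real.rpow_natCast]
      ring
    calc ‖f ((S (n+1)).1) - f ((S n).1)‖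
        ≤ (16*B/(D*d'))^(1/p) * u^q := hnb
      _ ≤ (16*B/(d'*d'))^(1/p) * u^q :=
          mul_le_mul_of_nonneg_right key1 (Real.rpow_nonneg hu0.le q)
      _ = 2 * (16*B)^(1/p) * d'^θ := by
          rw [key2, Real.div_rpow h16.le (mul_nonneg hd'0.le hd'0.le), hsq,
            ← Real.rpow_mul hd'0.le, show (2:ℝ)*(1/p) = 2/p by ring,
            hθdef, Real.rpow_sub hd'0]
          ring
      _ ≤ 2 * (16*B)^(1/p) * ((r^(n+1)*T)^θ) :=
          mul_le_mul_of_nonneg_left (Real.rpow_le_rpow hd'0.le hDub hθ.le)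
            (by positivity)
      _ = (2*(16*B)^(1/p)*T^θ) * ρ^(n+1) := by
          rw [Real.mul_rpow (pow_nonneg hr0.le _) hT.le, ← Real.rpow_natCast r (n+1),
            ← Real.rpow_mul hr0.le, mul_comm (((n+1:ℕ)):ℝ) θ,
            Real.rpow_mul hr0.le, Real.rpow_natCast, ← hρdef]
          ring
  have hA0 : (0:ℝ) ≤ 2*(16*B)^(1/p)*T^θ := by positivity
  have hpartial : ∀ N, ‖f t₀ - f ((S N).1)‖
      ≤ (2*(16*B)^(1/p)*T^θ) * (ρ * (1-ρ)⁻¹) := by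
    intro N
    have hS0 : (S 0).1 = t₀ := rfl
    calc ‖f t₀ - f ((S N).1)‖ = dist (f ((S 0).1)) (f ((S N).1)) := by
          rw [dist_eq_norm, hS0]
      _ ≤ ∑ i ∈ Finset.range N, dist (f ((S i).1)) (f ((S (i+1)).1)) :=
          dist_le_range_sum_dist (fun n => f ((S n).1)) N
      _ ≤ ∑ i ∈ Finset.range N, (2*(16*B)^(1/p)*T^θ) * ρ^(i+1) := by
          apply Finset.sum_le_sum
          intro i _
          rw [dist_eq_norm, norm_sub_rev]
          exact hstepbd i
      _ = (2*(16*B)^(1/p)*T^θ) * ∑ i ∈ Finset.range N, ρ^(i+1) := by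
          rw [← Finset.mul_sum]
      _ ≤ (2*(16*B)^(1/p)*T^θ) * (ρ * (1-ρ)⁻¹) := by
          apply mul_le_mul_of_nonneg_left ?_ hA0
          have hsum : ∑ i ∈ Finset.range N, ρ^(i+1) = ρ * ∑ i ∈ Finset.range N, ρ^i := by
            rw [Finset.mul_sum]
            exact Finset.sum_congr rfl fun i _ => pow_succ' ρ i
          rw [hsum]
          apply mul_le_mul_of_nonneg_left ?_ hρ0.le
          calc ∑ i ∈ Finset.range N, ρ^i ≤ ∑' i, ρ^i :=
                Summable.sum_le_tsum _ (fun i _ => pow_nonneg hρ0.le i)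
                  (summable_geometric_of_lt_one hρ0.le hρ1)
            _ = (1-ρ)⁻¹ := tsum_geometric_of_lt_one hρ0.le hρ1
  have htS : Tendsto (fun N => (S N).1) atTop (nhds 0) := by
    have hub : ∀ n, (S n).1 ≤ r^n * T :=
      fun n => le_of_lt (lt_of_lt_of_le (hinvS n).2.1 (hD0 n))
    have hgt : Tendsto (fun n : ℕ => r^n * T) atTop (nhds 0) := by
      simpa using (tendsto_pow_atTop_nhds_zero_of_lt_one hr0.le hr1).mul_const T
    exact squeeze_zero (fun n => (hinvS n).1.le) hub hgt
  have hlim : Tendsto (fun N => ‖f t₀ - f ((S N).1)‖) atTop (nhds ‖f t₀ - f 0‖) :=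
    (Tendsto.sub tendsto_const_nhds ((hf.tendsto 0).comp htS)).norm
  have hmain : ‖f t₀ - f 0‖ ≤ (2*(16*B)^(1/p)*T^θ) * (ρ * (1-ρ)⁻¹) :=
    le_of_tendsto' hlim hpartial
  have hgeo : ρ * (1-ρ)⁻¹ ≤ 2*q/θ := by
    have h := grr_geom (θ := θ) hq hθ
    rw [← hr, ← hρdef] at h
    exact h
  have h16le : (16*B)^(1/p) ≤ 16 * B^(1/p) := by
    rw [Real.mul_rpow (by norm_num) hB.le]
    apply mul_le_mul_of_nonneg_right ?_ (by positivity)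
    calc (16:ℝ)^(1/p) ≤ (16:ℝ)^(1:ℝ) :=
          Real.rpow_le_rpow_of_exponent_le (by norm_num) ((div_le_one hp0).mpr hp)
      _ = 16 := Real.rpow_one 16
  have hθT : (0:ℝ) ≤ T^θ * (4*q/θ) :=
    mul_nonneg (Real.rpow_nonneg hT.le θ) (by positivity)
  have hqθ : q / θ = p*q/(p*q-2) := by
    have h3 : (0:ℝ) < p*q - 2 := by nlinarith
    have h4 : q - 2/p = (p*q - 2)/p := by
      field_simp
    rw [hθdef, h4, div_div_eq_mul_div]
    ring
  calc ‖f t₀ - f 0‖ ≤ (2*(16*B)^(1/p)*T^θ) * (ρ * (1-ρ)⁻¹) := hmain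
    _ ≤ (2*(16*B)^(1/p)*T^θ) * (2*q/θ) := by
        apply mul_le_mul_of_nonneg_left hgeo hA0
    _ = (16*B)^(1/p) * (T^θ * (4*q/θ)) := by ring
    _ ≤ (16*B^(1/p)) * (T^θ * (4*q/θ)) := mul_le_mul_of_nonneg_right h16le hθT
    _ = 64 * (q/θ) * B^(1/p) * T^θ := by
        ring
    _ = 64 * (p*q/(p*q-2)) * B^(1/p) * T^θ := by rw [hqθ]

/-- GRR for the two endpoints of `[0,T]`. -/
private lemma grr_endpoint (f : ℝ → E) (hf : Continuous f) {T B p q : ℝ}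
    (hT : 0 < T) (hB : 0 < B) (hp : 1 ≤ p) (hq : 0 < q) (hpq : 2 < p * q)
    (hIint : ∫⁻ t in Icc 0 T, ∫⁻ s in Icc 0 T,
        ENNReal.ofReal (‖f t - f s‖ ^ p / |s - t| ^ (p*q)) ≤ ENNReal.ofReal B) :
    ‖f T - f 0‖ ≤ 128 * (p*q/(p*q-2)) * B^(1/p) * T^(q-2/p) := by
  have hp0 : (0:ℝ) < p := lt_of_lt_of_le one_pos hp
  have hpq0 : (0:ℝ) < p * q := by positivity
  set I : ℝ → ℝ≥0∞ :=
    fun t => ∫⁻ s in Icc 0 T, ENNReal.ofReal (‖f t - f s‖ ^ p / |s - t| ^ (p*q)) with hIdef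
  have hIint' : ∫⁻ t in Icc 0 T, I t ≤ ENNReal.ofReal B := hIint
  have mI : Measurable I := Measurable.lintegral_prod_right' (grr_meas2 f hf hp0.le hpq0.le)
  have hL : (0:ℝ) < 2*B/T := by positivity
  have hbad : volume {x | x ∈ Ioo 0 T ∧ ENNReal.ofReal (2*B/T) < I x}
      ≤ ENNReal.ofReal (T/2) := by
    have hint : ∫⁻ x in Ioo 0 T, I x ≤ ENNReal.ofReal B :=
      (lintegral_mono_set Ioo_subset_Icc_self).trans hIint'
    calc volume {x | x ∈ Ioo 0 T ∧ ENNReal.ofReal (2*B/T) < I x}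
        ≤ ENNReal.ofReal B / ENNReal.ofReal (2*B/T) :=
          grr_cheb mI measurableSet_Ioo (ENNReal.ofReal_pos.mpr hL).ne'
            ENNReal.ofReal_ne_top hint
      _ = ENNReal.ofReal (B / (2*B/T)) := (ENNReal.ofReal_div_of_pos hL).symm
      _ = ENNReal.ofReal (T/2) := by
          rw [show B/(2*B/T) = T/2 by field_simp]
  have hbad2 : volume {x | x ∈ Ioo 0 T ∧ (⊤ : ℝ≥0∞) < I x} = 0 := by
    have hempty : {x | x ∈ Ioo 0 T ∧ (⊤ : ℝ≥0∞) < I x} = ∅ := by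
      ext x
      simp [not_top_lt]
    rw [hempty, measure_empty]
  obtain ⟨t₀, ht₀, hI₀, -⟩ := grr_pick (h1 := I) (h2 := I)
    (L1 := ENNReal.ofReal (2*B/T)) (L2 := (⊤ : ℝ≥0∞)) hT (by
      rw [hbad2, add_zero]
      refine lt_of_le_of_lt hbad ?_
      rw [ENNReal.ofReal_lt_ofReal_iff hT]
      linarith)
  have hI₀4 : I t₀ ≤ ENNReal.ofReal (4*B/T) := by
    refine hI₀.trans (ENNReal.ofReal_le_ofReal ?_)
    rw [div_le_div_iff₀ hT hT]
    nlinarith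
  have half1 := grr_half f hf hT hB hp hq hpq hIint ht₀ hI₀4
  set g : ℝ → E := fun x => f (T - x) with hg
  have hgc : Continuous g := hf.comp (continuous_const.sub continuous_id)
  have hker : ∀ e : ℝ, Measurable fun σ : ℝ =>
      ENNReal.ofReal (‖f e - f σ‖ ^ p / |σ - e| ^ (p*q)) :=
    fun e => grr_meas1 f hf hp0.le hpq0.le e
  have hIg : ∀ t, (∫⁻ s in Icc 0 T, ENNReal.ofReal (‖g t - g s‖ ^ p / |s - t| ^ (p*q)))
      = I (T - t) := by
    intro t
    calc ∫⁻ s in Icc 0 T, ENNReal.ofReal (‖g t - g s‖ ^ p / |s - t| ^ (p*q))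
        = ∫⁻ s in Icc 0 T,
            ENNReal.ofReal (‖f (T-t) - f (T-s)‖ ^ p / |(T-s) - (T-t)| ^ (p*q)) := by
          apply lintegral_congr
          intro s
          simp only [hg]
          rw [show (T-s)-(T-t) = -(s-t) by ring, abs_neg]
      _ = ∫⁻ σ in Icc 0 T, ENNReal.ofReal (‖f (T-t) - f σ‖ ^ p / |σ - (T-t)| ^ (p*q)) :=
          grr_reflect T (fun σ => ENNReal.ofReal (‖f (T-t) - f σ‖ ^ p / |σ - (T-t)| ^ (p*q)))
            (hker (T-t))
      _ = I (T - t) := rfl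
  have hIgint : ∫⁻ t in Icc 0 T, ∫⁻ s in Icc 0 T,
      ENNReal.ofReal (‖g t - g s‖ ^ p / |s - t| ^ (p*q)) ≤ ENNReal.ofReal B := by
    calc ∫⁻ t in Icc 0 T, ∫⁻ s in Icc 0 T,
        ENNReal.ofReal (‖g t - g s‖ ^ p / |s - t| ^ (p*q))
        = ∫⁻ t in Icc 0 T, I (T - t) := lintegral_congr hIg
      _ = ∫⁻ t in Icc 0 T, I t := grr_reflect T I mI
      _ ≤ ENNReal.ofReal B := hIint'
  have ht₀' : T - t₀ ∈ Ioo 0 T := ⟨by linarith [ht₀.2], by linarith [ht₀.1]⟩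
  have hI₀g : ∫⁻ s in Icc 0 T,
      ENNReal.ofReal (‖g (T - t₀) - g s‖ ^ p / |s - (T - t₀)| ^ (p*q))
      ≤ ENNReal.ofReal (4*B/T) := by
    rw [hIg (T - t₀), show T - (T - t₀) = t₀ by ring]
    exact hI₀4
  have half2 := grr_half g hgc hT hB hp hq hpq hIgint ht₀' hI₀g
  have hgid : ‖g (T - t₀) - g 0‖ = ‖f T - f t₀‖ := by
    simp only [hg]
    rw [show T - (T - t₀) = t₀ by ring, sub_zero, norm_sub_rev]
  rw [hgid] at half2
  calc ‖f T - f 0‖ ≤ ‖f T - f t₀‖ + ‖f t₀ - f 0‖ := norm_sub_le_norm_sub_add_norm_sub _ _ _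
    _ ≤ 64*(p*q/(p*q-2))*B^(1/p)*T^(q-2/p) + 64*(p*q/(p*q-2))*B^(1/p)*T^(q-2/p) :=
        add_le_add half2 half1
    _ = 128 * (p*q/(p*q-2)) * B^(1/p) * T^(q-2/p) := by ring

/-- GRR for `f c - f a` with `c ∈ [a,b]`. -/
private lemma grr_point (f : ℝ → E) (hf : Continuous f) {a b c B p q : ℝ}
    (hab : a ≤ b) (hc : c ∈ Icc a b) (hB : 0 < B) (hp : 1 ≤ p) (hq : 0 < q) (hpq : 2 < p*q)
    (hIint : ∫⁻ t in Icc a b, ∫⁻ s in Icc a b,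
        ENNReal.ofReal (‖f t - f s‖ ^ p / |s - t| ^ (p*q)) ≤ ENNReal.ofReal B) :
    ‖f c - f a‖ ≤ 128 * (p*q/(p*q-2)) * B^(1/p) * (b-a)^(q-2/p) := by
  have hp0 : (0:ℝ) < p := lt_of_lt_of_le one_pos hp
  have hpq0 : (0:ℝ) < p*q := by positivity
  have hθ : 0 < q - 2/p := by
    rw [sub_pos, div_lt_iff₀ hp0]
    nlinarith
  have hpq2 : (0:ℝ) < p*q - 2 := by nlinarith
  have hKnn : (0:ℝ) ≤ 128 * (p*q/(p*q-2)) * B^(1/p) := by positivity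
  rcases eq_or_lt_of_le hc.1 with heq | hac
  · rw [← heq, sub_self, norm_zero]
    exact mul_nonneg hKnn (Real.rpow_nonneg (by linarith : (0:ℝ) ≤ b - a) _)
  · set T := c - a with hTdef
    have hT0 : 0 < T := by rw [hTdef]; linarith
    set g : ℝ → E := fun x => f (x + a) with hg
    have hgc : Continuous g := hf.comp (continuous_id.add continuous_const)
    have hker : ∀ e : ℝ, Measurable fun σ : ℝ =>
        ENNReal.ofReal (‖f e - f σ‖ ^ p / |σ - e| ^ (p*q)) :=
      fun e => grr_meas1 f hf hp0.le hpq0.le e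
    have hIdouble : ∫⁻ t in Icc 0 T, ∫⁻ s in Icc 0 T,
        ENNReal.ofReal (‖g t - g s‖ ^ p / |s - t| ^ (p*q)) ≤ ENNReal.ofReal B := by
      have h1 : ∀ t : ℝ, ∫⁻ s in Icc 0 T, ENNReal.ofReal (‖g t - g s‖ ^ p / |s - t| ^ (p*q))
          = ∫⁻ s in Icc a c, ENNReal.ofReal (‖f (t+a) - f s‖ ^ p / |s - (t+a)| ^ (p*q)) := by
        intro t
        calc ∫⁻ s in Icc 0 T, ENNReal.ofReal (‖g t - g s‖ ^ p / |s - t| ^ (p*q))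
            = ∫⁻ s in Icc 0 T,
                ENNReal.ofReal (‖f (t+a) - f (s+a)‖ ^ p / |(s+a) - (t+a)| ^ (p*q)) := by
              apply lintegral_congr
              intro s
              simp only [hg]
              rw [show (s+a)-(t+a) = s - t by ring]
          _ = ∫⁻ s in Icc a c, ENNReal.ofReal (‖f (t+a) - f s‖ ^ p / |s - (t+a)| ^ (p*q)) :=
              grr_translate a c
                (fun σ => ENNReal.ofReal (‖f (t+a) - f σ‖ ^ p / |σ - (t+a)| ^ (p*q)))
                (hker (t+a))
      have hsub : Icc a c ⊆ Icc a b := Icc_subset_Icc (le_refl a) hc.2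
      calc ∫⁻ t in Icc 0 T, ∫⁻ s in Icc 0 T,
          ENNReal.ofReal (‖g t - g s‖ ^ p / |s - t| ^ (p*q))
          = ∫⁻ t in Icc 0 T, (fun τ => ∫⁻ s in Icc a c,
              ENNReal.ofReal (‖f τ - f s‖ ^ p / |s - τ| ^ (p*q))) (t + a) :=
            lintegral_congr h1
        _ = ∫⁻ τ in Icc a c, ∫⁻ s in Icc a c,
              ENNReal.ofReal (‖f τ - f s‖ ^ p / |s - τ| ^ (p*q)) :=
            grr_translate a c _ (Measurable.lintegral_prod_right'
              (grr_meas2 f hf hp0.le hpq0.le))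
        _ ≤ ∫⁻ τ in Icc a b, ∫⁻ s in Icc a b,
              ENNReal.ofReal (‖f τ - f s‖ ^ p / |s - τ| ^ (p*q)) :=
            le_trans (lintegral_mono fun τ => lintegral_mono_set hsub)
              (lintegral_mono_set hsub)
        _ ≤ ENNReal.ofReal B := hIint
    have hend := grr_endpoint g hgc hT0 hB hp hq hpq hIdouble
    have hgT : g T = f c := by
      simp only [hg, hTdef]
      rw [sub_add_cancel]
    have hg0 : g 0 = f a := by simp only [hg, zero_add]
    rw [hgT, hg0] at hend
    refine hend.trans ?_
    have hba : T ≤ b - a := by rw [hTdef]; linarith [hc.2]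
    calc 128*(p*q/(p*q-2))*B^(1/p)*T^(q-2/p)
        = (128*(p*q/(p*q-2))*B^(1/p)) * T^(q-2/p) := by ring
      _ ≤ (128*(p*q/(p*q-2))*B^(1/p)) * (b-a)^(q-2/p) :=
          mul_le_mul_of_nonneg_left (Real.rpow_le_rpow hT0.le hba hθ.le) hKnn
      _ = 128*(p*q/(p*q-2))*B^(1/p)*(b-a)^(q-2/p) := by ring

/-- Pathwise, `ℝ≥0∞`-valued form of the GRR moment bound. -/
private lemma grr_pointwise (f : ℝ → E) (hf : Continuous f) {a b γ p q : ℝ}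
    (hab : a ≤ b) (hγ : 0 < γ) (hp : max 1 γ ≤ p) (hq : 0 < q) (hpq : 2 < p*q) :
    (⨆ t ∈ Icc a b, ENNReal.ofReal (‖f t - f a‖ ^ γ)) ≤
      ENNReal.ofReal ((128 * (p*q) / (p*q - 2) * (b-a)^(q - 2/p))^γ) *
        (∫⁻ s in Icc a b, ∫⁻ t in Icc a b,
          ENNReal.ofReal (‖f s - f t‖ ^ p / |t - s| ^ (p*q))) ^ (γ/p) := by
  have hp1 : (1:ℝ) ≤ p := le_trans (le_max_left _ _) hp
  have hp0 : (0:ℝ) < p := lt_of_lt_of_le one_pos hp1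
  have hθ : 0 < q - 2/p := by
    rw [sub_pos, div_lt_iff₀ hp0]
    nlinarith
  have hpq2 : (0:ℝ) < p*q - 2 := by nlinarith
  set Benn := ∫⁻ s in Icc a b, ∫⁻ t in Icc a b,
    ENNReal.ofReal (‖f s - f t‖ ^ p / |t - s| ^ (p*q)) with hBenn
  rcases eq_or_lt_of_le hab with rfl | hlt
  · refine le_trans ?_ (zero_le)
    apply iSup₂_le
    intro t ht
    have htA : t = a := le_antisymm ht.2 ht.1
    rw [htA, sub_self, norm_zero, Real.zero_rpow hγ.ne', ENNReal.ofReal_zero]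
  · rcases eq_top_or_lt_top Benn with htop | hfin
    · rw [htop, ENNReal.top_rpow_of_pos (by positivity : (0:ℝ) < γ/p), ENNReal.mul_top ?_]
      · exact le_top
      · apply (ENNReal.ofReal_pos.mpr ?_).ne'
        apply Real.rpow_pos_of_pos ?_ γ
        have h1 : (0:ℝ) < b - a := by linarith
        positivity
    · set Bt := Benn.toReal with hBt
      have hBtnn : 0 ≤ Bt := ENNReal.toReal_nonneg
      have hBofReal : ENNReal.ofReal Bt = Benn := ENNReal.ofReal_toReal hfin.ne
      have hba : (0:ℝ) ≤ b - a := by linarith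
      have hKnn : (0:ℝ) ≤ 128*(p*q)/(p*q-2)*(b-a)^(q-2/p) :=
        mul_nonneg (div_nonneg (by positivity) hpq2.le) (Real.rpow_nonneg hba _)
      have hreal : ∀ t ∈ Icc a b,
          ‖f t - f a‖ ≤ 128*(p*q/(p*q-2))*Bt^(1/p)*(b-a)^(q-2/p) := by
        intro t ht
        have hev : ∀ ε ∈ Ioi (0:ℝ),
            ‖f t - f a‖ ≤ 128*(p*q/(p*q-2))*(Bt+ε)^(1/p)*(b-a)^(q-2/p) := by
          intro ε hε
          have hε0 : (0:ℝ) < ε := hε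
          apply grr_point f hf hab ht (add_pos_of_nonneg_of_pos hBtnn hε0) hp1 hq hpq
          exact le_trans (le_of_eq hBofReal.symm) (ENNReal.ofReal_le_ofReal (by linarith))
        have hten : Tendsto (fun ε => 128*(p*q/(p*q-2))*(Bt+ε)^(1/p)*(b-a)^(q-2/p))
            (nhdsWithin 0 (Ioi 0))
            (nhds (128*(p*q/(p*q-2))*Bt^(1/p)*(b-a)^(q-2/p))) := by
          apply Tendsto.mul_const
          apply Tendsto.const_mul
          apply Filter.Tendsto.rpow_const ?_ (Or.inr (by positivity : (0:ℝ) ≤ 1/p))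
          have h2 : Tendsto (fun ε : ℝ => Bt + ε) (nhds 0) (nhds (Bt + 0)) :=
            (continuous_const.add continuous_id).tendsto 0
          rw [add_zero] at h2
          exact h2.mono_left nhdsWithin_le_nhds
        exact ge_of_tendsto hten (eventually_mem_nhdsWithin.mono hev)
      apply iSup₂_le
      intro t ht
      rw [← hBofReal, ENNReal.ofReal_rpow_of_nonneg hBtnn (by positivity : (0:ℝ) ≤ γ/p),
        ← ENNReal.ofReal_mul (Real.rpow_nonneg hKnn γ)]
      apply ENNReal.ofReal_le_ofReal
      calc ‖f t - f a‖ ^ γ ≤ (128*(p*q/(p*q-2))*Bt^(1/p)*(b-a)^(q-2/p))^γ :=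
            Real.rpow_le_rpow (norm_nonneg _) (hreal t ht) hγ.le
        _ = (128*(p*q)/(p*q-2)*(b-a)^(q-2/p))^γ * Bt^(γ/p) := by
            rw [show 128*(p*q/(p*q-2))*Bt^(1/p)*(b-a)^(q-2/p)
                = (128*(p*q)/(p*q-2)*(b-a)^(q-2/p)) * Bt^(1/p) by ring,
              Real.mul_rpow hKnn (Real.rpow_nonneg hBtnn _),
              ← Real.rpow_mul hBtnn, show 1/p*γ = γ/p by ring]

end GRRaux

/-- Garsia–Rodemich–Rumsey moment estimate, pathwise form (first inequality of
Lemma 4.1 of the paper): there is an absolute constant `C > 0` such that for every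
probability space, every continuous `ℝ^d`-valued process `Y` on `[a,b]` and all
`γ > 0`, `p ≥ max 1 γ`, `q > 0` with `p*q > 2`,
`E[sup_{t∈[a,b]} |Y_t - Y_a|^γ]
  ≤ (C·pq/(pq-2)·(b-a)^{q-2/p})^γ · E[(∫_a^b ∫_a^b |Y_s - Y_t|^p / |t-s|^{pq} ds dt)^{γ/p}]`. -/
theorem grr_pathwise :
    ∃ C : ℝ, 0 < C ∧
      ∀ (d : ℕ) (Ω : Type) [MeasureSpace Ω], IsProbabilityMeasure (volume : Measure Ω) →
      ∀ (a b : ℝ), a ≤ b →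
      ∀ (Y : Ω → ℝ → EuclideanSpace ℝ (Fin d)),
        (∀ ω, ContinuousOn (Y ω) (Icc a b)) →
        (∀ t, Measurable fun ω => Y ω t) →
        ∀ (γ p q : ℝ), 0 < γ → max 1 γ ≤ p → 0 < q → 2 < p * q →
          (∫⁻ ω, ⨆ t ∈ Icc a b, ENNReal.ofReal (‖Y ω t - Y ω a‖ ^ γ)) ≤
            ENNReal.ofReal ((C * (p * q) / (p * q - 2) * (b - a) ^ (q - 2 / p)) ^ γ) *
              ∫⁻ ω, (∫⁻ s in Icc a b, ∫⁻ t in Icc a b,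
                  ENNReal.ofReal (‖Y ω s - Y ω t‖ ^ p / |t - s| ^ (p * q))) ^ (γ / p) := by
  refine ⟨128, by norm_num, ?_⟩
  intro d Ω _ _ a b hab Y hY _ γ p q hγ hp hq hpq
  set g : Ω → ℝ → EuclideanSpace ℝ (Fin d) := fun ω x => Y ω (max a (min b x)) with hg
  have hgc : ∀ ω, Continuous (g ω) := by
    intro ω
    apply (hY ω).comp_continuous
    · exact continuous_const.max (continuous_const.min continuous_id)
    · intro x
      exact ⟨le_max_left _ _, max_le hab (min_le_left _ _)⟩
  have hge : ∀ ω t, t ∈ Icc a b → g ω t = Y ω t := by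
    intro ω t ht
    simp only [hg]
    rw [min_eq_right ht.2, max_eq_right ht.1]
  calc (∫⁻ ω, ⨆ t ∈ Icc a b, ENNReal.ofReal (‖Y ω t - Y ω a‖ ^ γ))
      = ∫⁻ ω, ⨆ t ∈ Icc a b, ENNReal.ofReal (‖g ω t - g ω a‖ ^ γ) := by
        refine lintegral_congr fun ω => ?_
        exact iSup_congr fun t => iSup_congr fun ht => by
          rw [hge ω t ht, hge ω a (left_mem_Icc.mpr hab)]
    _ ≤ ∫⁻ ω, ENNReal.ofReal ((128 * (p*q) / (p*q - 2) * (b-a)^(q - 2/p))^γ) *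
          (∫⁻ s in Icc a b, ∫⁻ t in Icc a b,
            ENNReal.ofReal (‖g ω s - g ω t‖ ^ p / |t - s| ^ (p*q))) ^ (γ/p) :=
        lintegral_mono fun ω => grr_pointwise (g ω) (hgc ω) hab hγ hp hq hpq
    _ = ENNReal.ofReal ((128 * (p*q) / (p*q - 2) * (b-a)^(q - 2/p))^γ) *
          ∫⁻ ω, (∫⁻ s in Icc a b, ∫⁻ t in Icc a b,
            ENNReal.ofReal (‖g ω s - g ω t‖ ^ p / |t - s| ^ (p*q))) ^ (γ/p) :=
        lintegral_const_mul' _ _ ENNReal.ofReal_ne_top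
    _ = ENNReal.ofReal ((128 * (p * q) / (p * q - 2) * (b - a) ^ (q - 2 / p)) ^ γ) *
          ∫⁻ ω, (∫⁻ s in Icc a b, ∫⁻ t in Icc a b,
            ENNReal.ofReal (‖Y ω s - Y ω t‖ ^ p / |t - s| ^ (p * q))) ^ (γ / p) := by
        congr 1
        refine lintegral_congr fun ω => ?_
        congr 1
        refine setLIntegral_congr_fun measurableSet_Icc (fun s hs => ?_)
        refine setLIntegral_congr_fun measurableSet_Icc (fun t ht => ?_)
        rw [hge ω s hs, hge ω t ht]
end

section
/- Condition (A3) for the fractional drift kernel (part of the paper's Example 2.2): For every H > 0 and T > 0 there exists a constant C > 0, depending only on H and T, such that for every partition π of [0,T] with left-endpoint map η_π, every t ∈ [0,T] and every δ ∈ (0, min(t/2, T−t)), one has ∫_0^t [ |(t+δ−s)^{H−1} − (t−s)^{H−1}| + |(t+δ−η_π(s))^{H−1} − (t−η_π(s))^{H−1}| ] ds ≤ C δ^{min(H,1)}. -/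
open MeasureTheory Set

/-- A partition `0 = t_0 < t_1 < ⋯ < t_n = T` of the interval `[0,T]`. -/
structure TimePartition (T : ℝ) where
  n : ℕ
  t : ℕ → ℝ
  npos : 0 < n
  zero : t 0 = 0
  last : t n = T
  lt : ∀ k, k < n → t k < t (k + 1)

/-- `η` is the left-endpoint map of the partition `π`: `η s = t_k` for `s ∈ [t_k, t_{k+1})`. -/
def IsLeftEndpointMap {T : ℝ} (π : TimePartition T) (η : ℝ → ℝ) : Prop :=
  ∀ s : ℝ, ∀ k, k < π.n → π.t k ≤ s → s < π.t (k + 1) → η s = π.t k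

namespace A3aux

lemma aux_int_eq {p x δ : ℝ} (hx : 0 < x) (hδ : 0 ≤ δ) (hp : p ≠ 0) :
    ∫ w in x..(x + δ), w ^ (p - 1) = ((x + δ) ^ p - x ^ p) / p := by
  rw [integral_rpow (Or.inr ⟨by intro h; apply hp; linarith, by
    rw [Set.uIcc_of_le (by linarith)]; rintro ⟨h0, -⟩; linarith⟩)]
  rw [show p - 1 + 1 = p by ring]

lemma abs_rpow_sub_rpow (p : ℝ) {x δ : ℝ} (hx : 0 < x) (hδ : 0 ≤ δ) :
    |(x + δ) ^ p - x ^ p| = |p| * ∫ w in x..(x + δ), w ^ (p - 1) := by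
  rcases eq_or_ne p 0 with rfl | hp
  · simp
  · have h := aux_int_eq hx hδ hp
    have hnn : 0 ≤ ∫ w in x..(x + δ), w ^ (p - 1) :=
      intervalIntegral.integral_nonneg (by linarith)
        (fun u hu => Real.rpow_nonneg (le_trans hx.le hu.1) _)
    have h2 : (x + δ) ^ p - x ^ p = p * ∫ w in x..(x + δ), w ^ (p - 1) := by
      rw [h]; field_simp
    rw [h2, abs_mul, abs_of_nonneg hnn]

lemma rpow_intble {q x δ : ℝ} (hx : 0 < x) (hδ : 0 ≤ δ) :
    IntervalIntegrable (fun w : ℝ => w ^ q) volume x (x + δ) :=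
  intervalIntegral.intervalIntegrable_rpow (Or.inr (by
    rw [Set.uIcc_of_le (by linarith)]; rintro ⟨h1, -⟩; linarith))

lemma shift_le {q u v δ : ℝ} (hq : q ≤ 0) (hu : 0 < u) (huv : u ≤ v) (hδ : 0 ≤ δ) :
    ∫ w in v..(v + δ), w ^ q ≤ ∫ w in u..(u + δ), w ^ q := by
  have hv : 0 < v := hu.trans_le huv
  have h := intervalIntegral.integral_comp_add_right (a := u) (b := u + δ)
    (fun w : ℝ => w ^ q) (v - u)
  rw [show u + (v - u) = v by ring, show u + δ + (v - u) = v + δ by ring] at h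
  rw [← h]
  have hint1 : IntervalIntegrable (fun w : ℝ => (w + (v - u)) ^ q) volume u (u + δ) := by
    apply ContinuousOn.intervalIntegrable
    apply ContinuousOn.rpow_const (continuous_add_right (v - u)).continuousOn
    intro w hw
    rw [Set.uIcc_of_le (by linarith)] at hw
    exact Or.inl (by intro h0; nlinarith [hw.1])
  refine intervalIntegral.integral_mono_on (by linarith) hint1 (rpow_intble hu hδ) ?_
  intro w hw
  exact Real.rpow_le_rpow_of_nonpos (by linarith [hw.1]) (by linarith) hq

lemma abs_sub_antitone {p u v δ : ℝ} (hp : p ≤ 1) (hu : 0 < u) (huv : u ≤ v) (hδ : 0 ≤ δ) :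
    |(v + δ) ^ p - v ^ p| ≤ |(u + δ) ^ p - u ^ p| := by
  rw [abs_rpow_sub_rpow p (hu.trans_le huv) hδ, abs_rpow_sub_rpow p hu hδ]
  exact mul_le_mul_of_nonneg_left (shift_le (by linarith) hu huv hδ) (abs_nonneg p)

lemma int_le_const {q c x δ : ℝ} (hδ : 0 ≤ δ) (hx : 0 < x)
    (hc : ∀ w, x ≤ w → w ≤ x + δ → w ^ q ≤ c) :
    ∫ w in x..(x + δ), w ^ q ≤ δ * c := by
  have h := intervalIntegral.integral_mono_on (a := x) (b := x + δ) (μ := volume)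
    (by linarith) (rpow_intble hx hδ) intervalIntegrable_const
    (fun w hw => hc w hw.1 hw.2)
  rwa [intervalIntegral.integral_const, add_sub_cancel_left, smul_eq_mul] at h

lemma kernel_integrable {t c p : ℝ} (hp : -1 < p) (ht : 0 ≤ t) (hc : t ≤ c) :
    IntegrableOn (fun s => (c - s) ^ p) (Ioo (0:ℝ) t) := by
  have h1 : IntervalIntegrable (fun u : ℝ => u ^ p) volume (c - t) (c - 0) :=
    intervalIntegral.intervalIntegrable_rpow' hp
  have h2 := (h1.comp_sub_left c).symm
  rw [show c - (c - t) = t by ring, show c - (c - 0) = 0 by ring] at h2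
  rwa [intervalIntegrable_iff_integrableOn_Ioo_of_le ht] at h2

lemma kernel_integral {t c p : ℝ} (hp : -1 < p) (ht : 0 ≤ t) (hc : t ≤ c) :
    ∫ s in Ioo (0:ℝ) t, (c - s) ^ p = (c ^ (p + 1) - (c - t) ^ (p + 1)) / (p + 1) := by
  rw [← integral_Ioc_eq_integral_Ioo, ← intervalIntegral.integral_of_le ht,
    intervalIntegral.integral_comp_sub_left (fun u : ℝ => u ^ p) c,
    integral_rpow (Or.inl hp)]
  norm_num

lemma lintegral_reduce {t B : ℝ} {f g : ℝ → ℝ}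
    (hfg : ∀ s ∈ Ioo (0:ℝ) t, f s ≤ g s) (hf0 : ∀ s ∈ Ioo (0:ℝ) t, 0 ≤ f s)
    (hg : IntegrableOn g (Ioo (0:ℝ) t)) (hB : (∫ s in Ioo (0:ℝ) t, g s) ≤ B) :
    (∫⁻ s in Ioo (0:ℝ) t, ENNReal.ofReal (f s)) ≤ ENNReal.ofReal B := by
  calc (∫⁻ s in Ioo (0:ℝ) t, ENNReal.ofReal (f s))
      ≤ ∫⁻ s in Ioo (0:ℝ) t, ENNReal.ofReal (g s) :=
        setLIntegral_mono' measurableSet_Ioo fun s hs => ENNReal.ofReal_le_ofReal (hfg s hs)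
    _ = ENNReal.ofReal (∫ s in Ioo (0:ℝ) t, g s) :=
        (ofReal_integral_eq_lintegral_ofReal hg
          ((ae_restrict_iff' measurableSet_Ioo).2
            (ae_of_all _ fun s hs => (hf0 s hs).trans (hfg s hs)))).symm
    _ ≤ _ := ENNReal.ofReal_le_ofReal hB

lemma eta_bounds {T : ℝ} (π : TimePartition T) (η : ℝ → ℝ) (hη : IsLeftEndpointMap π η)
    {s : ℝ} (h0 : 0 ≤ s) (hsT : s < T) : 0 ≤ η s ∧ η s ≤ s := by
  classical
  have hnonneg : ∀ k, k ≤ π.n → 0 ≤ π.t k := by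
    intro k
    induction k with
    | zero => intro _; rw [π.zero]
    | succ k ih =>
      intro hk
      have hk' : k < π.n := Nat.lt_of_succ_le hk
      have h1 := π.lt k hk'
      have h2 := ih (Nat.le_of_lt hk')
      linarith
  set P := fun k => π.t k ≤ s with hP
  set k₀ := Nat.findGreatest P π.n with hk₀
  have hP0 : P 0 := by simp only [hP, π.zero]; exact h0
  have hPk : P k₀ := Nat.findGreatest_spec (Nat.zero_le _) hP0
  have hk₀le : k₀ ≤ π.n := Nat.findGreatest_le _
  have hk₀lt : k₀ < π.n := by
    rcases lt_or_eq_of_le hk₀le with h | h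
    · exact h
    · exfalso
      have : π.t k₀ ≤ s := hPk
      rw [h, π.last] at this
      linarith
  have hnext : s < π.t (k₀ + 1) := by
    by_contra hcon
    push_neg at hcon
    exact Nat.findGreatest_is_greatest (Nat.lt_succ_self _) (Nat.succ_le_of_lt hk₀lt) hcon
  have heq := hη s k₀ hk₀lt hPk hnext
  rw [heq]
  exact ⟨hnonneg k₀ hk₀le, hPk⟩

end A3aux

/-- Condition (A3) for the fractional drift kernel `(t,s) ↦ (t-s)^{H-1}`
(part of Example 2.2 of the paper): for every `H > 0`, `T > 0` there is `C > 0`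
(depending only on `H`, `T`) such that for every partition of `[0,T]` with left-endpoint
map `η`, every `t ∈ [0,T]` and every `δ ∈ (0, min(t/2, T-t))`,
`∫_0^t [|(t+δ-s)^{H-1} - (t-s)^{H-1}| + |(t+δ-η(s))^{H-1} - (t-η(s))^{H-1}|] ds
  ≤ C δ^{min(H,1)}`. -/
theorem fractional_drift_kernel_A3 (H T : ℝ) (hH : 0 < H) (hT : 0 < T) :
    ∃ C : ℝ, 0 < C ∧
      ∀ (π : TimePartition T) (η : ℝ → ℝ), IsLeftEndpointMap π η →
      ∀ t δ : ℝ, t ∈ Icc (0 : ℝ) T → 0 < δ → δ < min (t / 2) (T - t) →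
        (∫⁻ s in Ioo (0 : ℝ) t,
            ENNReal.ofReal (|(t + δ - s) ^ (H - 1) - (t - s) ^ (H - 1)| +
              |(t + δ - η s) ^ (H - 1) - (t - η s) ^ (H - 1)|)) ≤
          ENNReal.ofReal (C * δ ^ min H 1) := by
  rcases le_or_gt H 1 with hH1 | hH1
  · -- Case H ≤ 1
    refine ⟨2 / H, by positivity, ?_⟩
    intro π η hη t δ ht hδ hδ'
    have hδt : δ < t / 2 := lt_of_lt_of_le hδ' (min_le_left _ _)
    have hδT : δ < T - t := lt_of_lt_of_le hδ' (min_le_right _ _)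
    have ht0 : 0 < t := by linarith
    rw [min_eq_left hH1]
    apply A3aux.lintegral_reduce
      (g := fun s => 2 * ((t - s) ^ (H - 1) - (t + δ - s) ^ (H - 1)))
    · intro s hs
      obtain ⟨hs0, hst⟩ := hs
      obtain ⟨hη0, hηs⟩ := A3aux.eta_bounds π η hη hs0.le (by linarith [ht.2])
      have hx : 0 < t - s := by linarith
      have hmono : |(t + δ - η s) ^ (H - 1) - (t - η s) ^ (H - 1)| ≤
          |(t + δ - s) ^ (H - 1) - (t - s) ^ (H - 1)| := by
        rw [show t + δ - η s = (t - η s) + δ by ring, show t + δ - s = (t - s) + δ by ring]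
        exact A3aux.abs_sub_antitone (by linarith) hx (by linarith) hδ.le
      have hle : (t + δ - s) ^ (H - 1) ≤ (t - s) ^ (H - 1) :=
        Real.rpow_le_rpow_of_nonpos hx (by linarith) (by linarith)
      have habs : |(t + δ - s) ^ (H - 1) - (t - s) ^ (H - 1)| =
          (t - s) ^ (H - 1) - (t + δ - s) ^ (H - 1) := by
        rw [abs_of_nonpos (by linarith)]; ring
      linarith
    · intro s hs; positivity
    · exact ((A3aux.kernel_integrable (p := H - 1) (by linarith) ht0.le le_rfl).sub
        (A3aux.kernel_integrable (p := H - 1) (by linarith) ht0.le (by linarith))).const_mul 2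
    · have k1 := A3aux.kernel_integral (t := t) (c := t) (p := H - 1) (by linarith) ht0.le le_rfl
      have k2 := A3aux.kernel_integral (t := t) (c := t + δ) (p := H - 1)
        (by linarith) ht0.le (by linarith)
      rw [integral_const_mul (2:ℝ),
        integral_sub (A3aux.kernel_integrable (p := H - 1) (by linarith) ht0.le le_rfl)
          (A3aux.kernel_integrable (p := H - 1) (by linarith) ht0.le (by linarith)),
        k1, k2, show H - 1 + 1 = H by ring, sub_self, show t + δ - t = δ by ring,
        Real.zero_rpow hH.ne']
      have hcomp : t ^ H ≤ (t + δ) ^ H := Real.rpow_le_rpow ht0.le (by linarith) hH.le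
      have e : 2 * ((t ^ H - 0) / H - ((t + δ) ^ H - δ ^ H) / H)
          = 2 / H * (t ^ H - (t + δ) ^ H + δ ^ H) := by
        field_simp; ring
      rw [e]
      exact mul_le_mul_of_nonneg_left (by linarith) (by positivity)
  rcases le_or_gt H 2 with hH2 | hH2
  · -- Case 1 < H ≤ 2
    refine ⟨2 * T ^ (H - 1), by positivity, ?_⟩
    intro π η hη t δ ht hδ hδ'
    have hδt : δ < t / 2 := lt_of_lt_of_le hδ' (min_le_left _ _)
    have hδT : δ < T - t := lt_of_lt_of_le hδ' (min_le_right _ _)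
    have ht0 : 0 < t := by linarith
    rw [min_eq_right hH1.le, Real.rpow_one]
    apply A3aux.lintegral_reduce
      (g := fun s => 2 * ((H - 1) * (δ * (t - s) ^ (H - 2))))
    · intro s hs
      obtain ⟨hs0, hst⟩ := hs
      obtain ⟨hη0, hηs⟩ := A3aux.eta_bounds π η hη hs0.le (by linarith [ht.2])
      have hx : 0 < t - s := by linarith
      have hmono : |(t + δ - η s) ^ (H - 1) - (t - η s) ^ (H - 1)| ≤
          |(t + δ - s) ^ (H - 1) - (t - s) ^ (H - 1)| := by
        rw [show t + δ - η s = (t - η s) + δ by ring, show t + δ - s = (t - s) + δ by ring]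
        exact A3aux.abs_sub_antitone (by linarith) hx (by linarith) hδ.le
      have hbound : |(t + δ - s) ^ (H - 1) - (t - s) ^ (H - 1)| ≤
          (H - 1) * (δ * (t - s) ^ (H - 2)) := by
        rw [show t + δ - s = (t - s) + δ by ring,
          A3aux.abs_rpow_sub_rpow (H - 1) hx hδ.le, show H - 1 - 1 = H - 2 by ring]
        have hint : ∫ w in (t - s)..(t - s + δ), w ^ (H - 2) ≤ δ * (t - s) ^ (H - 2) :=
          A3aux.int_le_const hδ.le hx (fun w hw1 _ =>
            Real.rpow_le_rpow_of_nonpos hx hw1 (by linarith))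
        rw [abs_of_nonneg (by linarith : (0:ℝ) ≤ H - 1)]
        exact mul_le_mul_of_nonneg_left hint (by linarith)
      linarith
    · intro s hs; positivity
    · exact (((A3aux.kernel_integrable (p := H - 2) (by linarith) ht0.le
        le_rfl).const_mul δ).const_mul (H - 1)).const_mul 2
    · rw [integral_const_mul (2:ℝ), integral_const_mul (H-1 : ℝ), integral_const_mul δ,
        A3aux.kernel_integral (t := t) (c := t) (p := H - 2) (by linarith) ht0.le le_rfl,
        show H - 2 + 1 = H - 1 by ring, sub_self, Real.zero_rpow (by linarith : H - 1 ≠ 0)]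
      have hcomp : t ^ (H - 1) ≤ T ^ (H - 1) :=
        Real.rpow_le_rpow ht0.le ht.2 (by linarith)
      have e : 2 * ((H - 1) * (δ * ((t ^ (H - 1) - 0) / (H - 1)))) = 2 * δ * t ^ (H - 1) := by
        have h : H - 1 ≠ 0 := by linarith
        field_simp
        ring
      rw [e]
      nlinarith [hδ.le, Real.rpow_nonneg hT.le (H - 1)]
  · -- Case H > 2
    have hH1' : (0:ℝ) < H - 1 := by linarith
    refine ⟨2 * (H - 1) * T ^ (H - 1), by positivity, ?_⟩
    intro π η hη t δ ht hδ hδ'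
    have hδt : δ < t / 2 := lt_of_lt_of_le hδ' (min_le_left _ _)
    have hδT : δ < T - t := lt_of_lt_of_le hδ' (min_le_right _ _)
    have ht0 : 0 < t := by linarith
    rw [min_eq_right hH1.le, Real.rpow_one]
    apply A3aux.lintegral_reduce
      (g := fun _ => 2 * ((H - 1) * (δ * T ^ (H - 2))))
    · intro s hs
      obtain ⟨hs0, hst⟩ := hs
      obtain ⟨hη0, hηs⟩ := A3aux.eta_bounds π η hη hs0.le (by linarith [ht.2])
      have key : ∀ y, 0 ≤ y → y ≤ s → |(t + δ - y) ^ (H - 1) - (t - y) ^ (H - 1)| ≤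
          (H - 1) * (δ * T ^ (H - 2)) := by
        intro y hy0 hys
        have hxy : 0 < t - y := by linarith
        rw [show t + δ - y = (t - y) + δ by ring,
          A3aux.abs_rpow_sub_rpow (H - 1) hxy hδ.le, show H - 1 - 1 = H - 2 by ring]
        have hint : ∫ w in (t - y)..(t - y + δ), w ^ (H - 2) ≤ δ * T ^ (H - 2) :=
          A3aux.int_le_const hδ.le hxy (fun w hw1 hw2 =>
            Real.rpow_le_rpow (by linarith) (by linarith) (by linarith))
        rw [abs_of_nonneg (by linarith : (0:ℝ) ≤ H - 1)]
        exact mul_le_mul_of_nonneg_left hint (by linarith)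
      have k1 := key s hs0.le le_rfl
      have k2 := key (η s) hη0 hηs
      linarith
    · intro s hs; positivity
    · exact integrableOn_const (by rw [Real.volume_Ioo]; exact ENNReal.ofReal_ne_top)
    · rw [setIntegral_const, measureReal_def, Real.volume_Ioo, ENNReal.toReal_ofReal (by linarith), smul_eq_mul]
      have hTe : T ^ (H - 1) = T ^ (H - 2) * T := by
        rw [show H - 1 = H - 2 + 1 by ring, Real.rpow_add_one hT.ne']
      rw [hTe]
      nlinarith [mul_le_mul_of_nonneg_right ht.2
        (show (0:ℝ) ≤ 2 * ((H - 1) * (δ * T ^ (H - 2))) by positivity)]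
end

section
/- Condition (A4) for the fractional drift kernel (part of the paper's Example 2.2): For every H > 0 and T > 0 there exists a constant C > 0, depending only on H and T, such that for every partition π of [0,T] with mesh δ_π and left-endpoint map η_π, and every t ∈ [0,T], one has ∫_0^t |(t−s)^{H−1} − (t−η_π(s))^{H−1}| ds ≤ C δ_π^{min(H,1)}. -/
open MeasureTheory Set

/-- The mesh `δ_π = max_{0 ≤ k ≤ n-1} (t_{k+1} - t_k)` of a partition. -/
noncomputable def TimePartition.mesh {T : ℝ} (π : TimePartition T) : ℝ :=
  (Finset.range π.n).sup' (Finset.nonempty_range_iff.mpr π.npos.ne')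
    (fun k => π.t (k + 1) - π.t k)

lemma TimePartition.mono {T : ℝ} (π : TimePartition T) {j k : ℕ} (hjk : j ≤ k) (hk : k ≤ π.n) :
    π.t j ≤ π.t k := by
  induction k with
  | zero => simp [Nat.le_zero.mp hjk]
  | succ m ih =>
    rcases Nat.lt_succ_iff_lt_or_eq.mp (Nat.lt_succ_of_le hjk) with h | h
    · exact (ih (Nat.lt_succ_iff.mp h) (by omega)).trans (π.lt m (by omega)).le
    · exact h ▸ le_rfl

lemma TimePartition.inc_le_mesh {T : ℝ} (π : TimePartition T) {k : ℕ} (hk : k < π.n) :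
    π.t (k + 1) - π.t k ≤ π.mesh := by
  rw [TimePartition.mesh]
  exact Finset.le_sup' (fun k => π.t (k + 1) - π.t k) (Finset.mem_range.mpr hk)

lemma TimePartition.mesh_pos {T : ℝ} (π : TimePartition T) : 0 < π.mesh :=
  lt_of_lt_of_le (by linarith [π.lt 0 π.npos]) (π.inc_le_mesh π.npos)

lemma TimePartition.exists_index {T : ℝ} (π : TimePartition T) {s : ℝ} (h0 : 0 ≤ s) (hs : s < T) :
    ∃ k, k < π.n ∧ π.t k ≤ s ∧ s < π.t (k + 1) := by
  classical
  have h0' : π.t 0 ≤ s := by rw [π.zero]; exact h0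
  have hPn : ¬ π.t π.n ≤ s := by rw [π.last]; linarith
  have hex : ∃ m, ¬ π.t m ≤ s := ⟨π.n, hPn⟩
  have hm : ¬ π.t (Nat.find hex) ≤ s := Nat.find_spec hex
  have hmn : Nat.find hex ≤ π.n := Nat.find_le hPn
  have hmpos : 0 < Nat.find hex := by
    rcases Nat.eq_zero_or_pos (Nat.find hex) with h | h
    · exact absurd (h ▸ h0') hm
    · exact h
  have hprev : π.t (Nat.find hex - 1) ≤ s := by
    have := Nat.find_min hex (m := Nat.find hex - 1) (by omega)
    exact not_not.mp this
  refine ⟨Nat.find hex - 1, by omega, hprev, ?_⟩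
  have : Nat.find hex - 1 + 1 = Nat.find hex := by omega
  rw [this]
  exact lt_of_not_ge hm

lemma rpow_mvt {p a b T : ℝ} (hp : 0 < p) (ha : 0 < a) (hab : a ≤ b) (hbT : b ≤ T) :
    b ^ p - a ^ p ≤ p * (a ^ (p - 1) + T ^ (p - 1)) * (b - a) := by
  have hT : 0 < T := lt_of_lt_of_le (lt_of_lt_of_le ha hab) hbT
  have hderiv : ∀ x ∈ Icc a b, HasDerivWithinAt (fun x : ℝ => x ^ p)
      (p * x ^ (p - 1)) (Icc a b) x := by
    intro x hx
    have hx0 : x ≠ 0 := ne_of_gt (lt_of_lt_of_le ha hx.1)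
    simpa [mul_comm] using (Real.hasDerivAt_rpow_const (p := p) (Or.inl hx0)).hasDerivWithinAt
  have hbound : ∀ x ∈ Icc a b, ‖p * x ^ (p - 1)‖ ≤ p * (a ^ (p - 1) + T ^ (p - 1)) := by
    intro x hx
    have hx0 : 0 < x := lt_of_lt_of_le ha hx.1
    rw [Real.norm_eq_abs, abs_of_nonneg (by positivity)]
    rcases le_or_gt p 1 with h1 | h1
    · have : x ^ (p - 1) ≤ a ^ (p - 1) :=
        Real.rpow_le_rpow_of_nonpos ha hx.1 (by linarith)
      nlinarith [Real.rpow_nonneg hT.le (p - 1)]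
    · have : x ^ (p - 1) ≤ T ^ (p - 1) :=
        Real.rpow_le_rpow hx0.le (hx.2.trans hbT) (by linarith)
      nlinarith [Real.rpow_nonneg ha.le (p - 1)]
  have := (convex_Icc a b).norm_image_sub_le_of_norm_hasDerivWithin_le hderiv hbound
    (left_mem_Icc.mpr hab) (right_mem_Icc.mpr hab)
  rw [Real.norm_eq_abs, Real.norm_eq_abs] at this
  have h1 := le_trans (le_abs_self _) this
  rwa [abs_of_nonneg (by linarith)] at h1

lemma integral_Ioo_shift {t c p : ℝ} (ht : 0 < t) (hp : -1 < p) :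
    ∫ s in Ioo (0:ℝ) t, (t + c - s) ^ p =
      ((t + c) ^ (p + 1) - c ^ (p + 1)) / (p + 1) := by
  rw [← integral_Ioc_eq_integral_Ioo, ← intervalIntegral.integral_of_le ht.le]
  have := intervalIntegral.integral_comp_sub_left (a := 0) (b := t)
    (fun x : ℝ => x ^ p) (t + c)
  simp only [sub_zero] at this
  rw [this, show t + c - t = c by ring, integral_rpow (Or.inl hp)]

lemma integral_Ioo_rpow_sub {t p : ℝ} (ht : 0 < t) (hp : -1 < p) :
    ∫ s in Ioo (0:ℝ) t, (t - s) ^ p = t ^ (p + 1) / (p + 1) := by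
  have := integral_Ioo_shift (t := t) (c := 0) ht hp
  simpa [Real.zero_rpow (show p + 1 ≠ 0 by linarith)] using this

lemma integrableOn_Ioo_rpow_sub {t p : ℝ} (ht : 0 < t) (hp : -1 < p) :
    IntegrableOn (fun s => (t - s) ^ p) (Ioo (0:ℝ) t) := by
  have h := (intervalIntegral.intervalIntegrable_rpow' (a := 0) (b := t) hp).comp_sub_left t
  replace h := h.symm
  rw [intervalIntegrable_iff_integrableOn_Ioc_of_le (by linarith : t - t ≤ t - 0)] at h
  simp only [sub_self, sub_zero] at h
  exact h.mono_set Ioo_subset_Ioc_self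


/-- Condition (A4) for the fractional drift kernel `(t,s) ↦ (t-s)^{H-1}`
(part of Example 2.2 of the paper): for every `H > 0`, `T > 0` there is `C > 0`
(depending only on `H`, `T`) such that for every partition of `[0,T]` with mesh `δ_π`
and left-endpoint map `η`, and every `t ∈ [0,T]`,
`∫_0^t |(t-s)^{H-1} - (t-η(s))^{H-1}| ds ≤ C δ_π^{min(H,1)}`. -/
theorem fractional_drift_kernel_A4 (H T : ℝ) (hH : 0 < H) (hT : 0 < T) :
    ∃ C : ℝ, 0 < C ∧
      ∀ (π : TimePartition T) (η : ℝ → ℝ), IsLeftEndpointMap π η →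
      ∀ t : ℝ, t ∈ Icc (0 : ℝ) T →
        (∫⁻ s in Ioo (0 : ℝ) t,
            ENNReal.ofReal |(t - s) ^ (H - 1) - (t - η s) ^ (H - 1)|) ≤
          ENNReal.ofReal (C * π.mesh ^ min H 1) := by
  rcases le_or_gt H 1 with hH1 | hH1
  · -- case H ≤ 1
    refine ⟨1 / H, by positivity, ?_⟩
    intro π η hη t ht
    set δ := π.mesh with hδdef
    have hδ0 : 0 < δ := π.mesh_pos
    have hmin : min H 1 = H := min_eq_left hH1
    rcases eq_or_lt_of_le ht.1 with h0 | h0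
    · rw [← h0]
      simp
    -- pointwise facts
    have hfacts : ∀ s ∈ Ioo (0:ℝ) t, 0 < t - s ∧ t - s ≤ t - η s ∧ t - η s ≤ t - s + δ := by
      intro s hs
      obtain ⟨k, hk, h1, h2⟩ := π.exists_index hs.1.le (lt_of_lt_of_le hs.2 ht.2)
      have hηs : η s = π.t k := hη s k hk h1 h2
      have hinc := π.inc_le_mesh hk
      refine ⟨by linarith [hs.2], by rw [hηs]; linarith, by rw [hηs]; linarith⟩
    set g : ℝ → ℝ := fun s => (t - s) ^ (H - 1) - (t + δ - s) ^ (H - 1) with hgdef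
    have hpt : ∀ s ∈ Ioo (0:ℝ) t,
        ENNReal.ofReal |(t - s) ^ (H - 1) - (t - η s) ^ (H - 1)| ≤
        ENNReal.ofReal (g s) := by
      intro s hs
      obtain ⟨ha, hab, hbd⟩ := hfacts s hs
      apply ENNReal.ofReal_le_ofReal
      have h1 : (t - η s) ^ (H - 1) ≤ (t - s) ^ (H - 1) :=
        Real.rpow_le_rpow_of_nonpos ha hab (by linarith)
      have h2 : (t + δ - s) ^ (H - 1) ≤ (t - η s) ^ (H - 1) :=
        Real.rpow_le_rpow_of_nonpos (by linarith) (by linarith) (by linarith)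
      rw [abs_of_nonneg (by linarith)]
      simp only [hgdef]
      linarith
    have hgnn : ∀ s ∈ Ioo (0:ℝ) t, 0 ≤ g s := by
      intro s hs
      obtain ⟨ha, -, -⟩ := hfacts s hs
      have : (t + δ - s) ^ (H - 1) ≤ (t - s) ^ (H - 1) :=
        Real.rpow_le_rpow_of_nonpos ha (by linarith) (by linarith)
      simp only [hgdef]; linarith
    have hint1 : IntegrableOn (fun s => (t - s) ^ (H - 1)) (Ioo (0:ℝ) t) :=
      integrableOn_Ioo_rpow_sub h0 (by linarith)
    have hint2 : IntegrableOn (fun s => (t + δ - s) ^ (H - 1)) (Ioo (0:ℝ) t) :=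
      (integrableOn_Ioo_rpow_sub (by linarith : (0:ℝ) < t + δ)
        (by linarith : (-1:ℝ) < H - 1)).mono_set (Ioo_subset_Ioo le_rfl (by linarith))
    have hgint : IntegrableOn g (Ioo (0:ℝ) t) := hint1.sub hint2
    calc (∫⁻ s in Ioo (0:ℝ) t,
            ENNReal.ofReal |(t - s) ^ (H - 1) - (t - η s) ^ (H - 1)|)
        ≤ ∫⁻ s in Ioo (0:ℝ) t, ENNReal.ofReal (g s) :=
          setLIntegral_mono' measurableSet_Ioo hpt
      _ = ENNReal.ofReal (∫ s in Ioo (0:ℝ) t, g s) :=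
          (ofReal_integral_eq_lintegral_ofReal hgint
            ((ae_restrict_iff' measurableSet_Ioo).mpr (ae_of_all _ hgnn))).symm
      _ ≤ ENNReal.ofReal (1 / H * δ ^ min H 1) := by
          apply ENNReal.ofReal_le_ofReal
          rw [hgdef]
          rw [integral_sub hint1 hint2, integral_Ioo_rpow_sub h0 (by linarith),
            integral_Ioo_shift h0 (by linarith)]
          have e1 : H - 1 + 1 = H := by ring
          rw [e1, hmin]
          have h3 : t ^ H ≤ (t + δ) ^ H := Real.rpow_le_rpow h0.le (by linarith) hH.le
          rw [show 1 / H * δ ^ H = δ ^ H / H by ring]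
          have h4 : t ^ H - ((t + δ) ^ H - δ ^ H) ≤ δ ^ H := by linarith
          rw [div_sub_div_same]
          exact (div_le_div_iff_of_pos_right hH).mpr h4
  · -- case 1 < H
    refine ⟨H * T ^ (H - 1) + 1, by positivity, ?_⟩
    intro π η hη t ht
    set δ := π.mesh with hδdef
    have hδ0 : 0 < δ := π.mesh_pos
    have hmin : min H 1 = 1 := min_eq_right hH1.le
    rcases eq_or_lt_of_le ht.1 with h0 | h0
    · rw [← h0]
      simp
    have hfacts : ∀ s ∈ Ioo (0:ℝ) t, 0 < t - s ∧ t - s ≤ t - η s ∧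
        t - η s ≤ t - s + δ ∧ t - η s ≤ T := by
      intro s hs
      obtain ⟨k, hk, h1, h2⟩ := π.exists_index hs.1.le (lt_of_lt_of_le hs.2 ht.2)
      have hηs : η s = π.t k := hη s k hk h1 h2
      have hinc := π.inc_le_mesh hk
      have hknn : 0 ≤ π.t k := by
        have := π.mono (j := 0) (k := k) (Nat.zero_le k) hk.le
        rwa [π.zero] at this
      refine ⟨by linarith [hs.2], by rw [hηs]; linarith, by rw [hηs]; linarith,
        by rw [hηs]; linarith [ht.2]⟩
    set g : ℝ → ℝ := fun s => (H - 1) * δ * ((t - s) ^ (H - 2) + T ^ (H - 2)) with hgdef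
    have hpt : ∀ s ∈ Ioo (0:ℝ) t,
        ENNReal.ofReal |(t - s) ^ (H - 1) - (t - η s) ^ (H - 1)| ≤
        ENNReal.ofReal (g s) := by
      intro s hs
      obtain ⟨ha, hab, hbd, hbT⟩ := hfacts s hs
      apply ENNReal.ofReal_le_ofReal
      have h1 : (t - s) ^ (H - 1) ≤ (t - η s) ^ (H - 1) :=
        Real.rpow_le_rpow ha.le hab (by linarith)
      rw [abs_of_nonpos (by linarith)]
      have hmvt := rpow_mvt (p := H - 1) (by linarith) ha hab hbT
      have e : H - 1 - 1 = H - 2 := by ring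
      rw [e] at hmvt
      have hnn : 0 ≤ (H - 1) * ((t - s) ^ (H - 2) + T ^ (H - 2)) := by
        have := Real.rpow_nonneg ha.le (H - 2)
        have := Real.rpow_nonneg hT.le (H - 2)
        nlinarith
      have : (H - 1) * ((t - s) ^ (H - 2) + T ^ (H - 2)) * (t - η s - (t - s)) ≤
          (H - 1) * ((t - s) ^ (H - 2) + T ^ (H - 2)) * δ :=
        mul_le_mul_of_nonneg_left (by linarith) hnn
      simp only [hgdef]
      nlinarith
    have hgnn : ∀ s ∈ Ioo (0:ℝ) t, 0 ≤ g s := by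
      intro s hs
      obtain ⟨ha, -, -, -⟩ := hfacts s hs
      have h1 := Real.rpow_nonneg ha.le (H - 2)
      have h2 := Real.rpow_nonneg hT.le (H - 2)
      simp only [hgdef]
      exact mul_nonneg (mul_nonneg (by linarith) hδ0.le) (by linarith)
    have hint1 : IntegrableOn (fun s => (t - s) ^ (H - 2)) (Ioo (0:ℝ) t) :=
      integrableOn_Ioo_rpow_sub h0 (by linarith)
    have hconst : IntegrableOn (fun _ : ℝ => T ^ (H - 2)) (Ioo (0:ℝ) t) :=
      (integrableOn_const_iff (C := T ^ (H - 2))).mpr (Or.inr measure_Ioo_lt_top)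
    have hgint : IntegrableOn g (Ioo (0:ℝ) t) := by
      rw [hgdef]
      exact (hint1.add hconst).const_mul ((H - 1) * δ)
    calc (∫⁻ s in Ioo (0:ℝ) t,
            ENNReal.ofReal |(t - s) ^ (H - 1) - (t - η s) ^ (H - 1)|)
        ≤ ∫⁻ s in Ioo (0:ℝ) t, ENNReal.ofReal (g s) :=
          setLIntegral_mono' measurableSet_Ioo hpt
      _ = ENNReal.ofReal (∫ s in Ioo (0:ℝ) t, g s) :=
          (ofReal_integral_eq_lintegral_ofReal hgint
            ((ae_restrict_iff' measurableSet_Ioo).mpr (ae_of_all _ hgnn))).symm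
      _ ≤ ENNReal.ofReal ((H * T ^ (H - 1) + 1) * δ ^ min H 1) := by
          apply ENNReal.ofReal_le_ofReal
          rw [hmin, Real.rpow_one, hgdef]
          rw [integral_const_mul, integral_add hint1 hconst,
            integral_Ioo_rpow_sub h0 (by linarith), setIntegral_const,
            Real.volume_real_Ioo, sub_zero, max_eq_left h0.le]
          have e2 : H - 2 + 1 = H - 1 := by ring
          rw [e2]
          have f1 : t ^ (H - 1) ≤ T ^ (H - 1) :=
            Real.rpow_le_rpow h0.le ht.2 (by linarith)
          have f2 : T ^ (H - 2) * T = T ^ (H - 1) := by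
            rw [← Real.rpow_add_one hT.ne' (H - 2), show H - 2 + 1 = H - 1 by ring]
          have f3 : 0 ≤ T ^ (H - 2) := Real.rpow_nonneg hT.le _
          have f4 : t * T ^ (H - 2) ≤ T ^ (H - 1) := by nlinarith [ht.2]
          have f5 : 0 ≤ T ^ (H - 1) := Real.rpow_nonneg hT.le _
          have h6 : t ^ (H - 1) + (H - 1) * (t * T ^ (H - 2)) ≤ H * T ^ (H - 1) := by
            nlinarith
          have h7 : (H - 1) * δ * (t ^ (H - 1) / (H - 1) + t • T ^ (H - 2)) =
              δ * (t ^ (H - 1) + (H - 1) * (t * T ^ (H - 2))) := by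
            have e3 : (H - 1) * (t ^ (H - 1) / (H - 1)) = t ^ (H - 1) :=
              mul_div_cancel₀ _ (by linarith)
            rw [smul_eq_mul]
            linear_combination δ * e3
          rw [h7]
          calc δ * (t ^ (H - 1) + (H - 1) * (t * T ^ (H - 2)))
              ≤ δ * (H * T ^ (H - 1)) := mul_le_mul_of_nonneg_left h6 hδ0.le
            _ ≤ (H * T ^ (H - 1) + 1) * δ := by nlinarith
end

section
/- Condition (A5) for fractional kernels (the verification in the paper's Remark 2.5): Let T > 0, α₁ ∈ (1/2, ∞), α₂ ∈ (0, ∞), and set α' := min(α₁, 2α₂, α₁ + α₂ − 1/2)/2. Then there exists a constant C > 0, depending only on α₁, α₂ and T, such that for all 0 ≤ r ≤ r' ≤ t ≤ T one has ∫_r^{r'} (t−s)^{α₁−1} (s−r)^{α₂−1/2} ds ≤ C (r'−r)^{min(2α',1)}. -/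
open MeasureTheory Set

lemma hlp_left (a b c : ℝ) (hab : a ≤ b) (hc : -1 < c) :
    ∫⁻ s in Ioo a b, ENNReal.ofReal ((s - a) ^ c) = ENNReal.ofReal ((b - a) ^ (c + 1) / (c + 1)) := by
  have hint : IntervalIntegrable (fun s => (s - a) ^ c) volume a b := by
    have h := (intervalIntegral.intervalIntegrable_rpow' (a := a - a) (b := b - a) hc).comp_sub_right a
    simpa using h
  have hnn : 0 ≤ᶠ[ae (volume.restrict (Ioo a b))] fun s => (s - a) ^ c := by
    rw [Filter.EventuallyLE, ae_restrict_iff' measurableSet_Ioo]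
    filter_upwards with s hs
    exact Real.rpow_nonneg (by linarith [hs.1]) _
  have hio : IntegrableOn (fun s => (s - a) ^ c) (Ioo a b) volume :=
    (hint.1).mono_set Ioo_subset_Ioc_self
  rw [← ofReal_integral_eq_lintegral_ofReal hio hnn]
  congr 1
  rw [← integral_Ioc_eq_integral_Ioo, ← intervalIntegral.integral_of_le hab]
  rw [intervalIntegral.integral_comp_sub_right (fun x => x ^ c) a]
  rw [integral_rpow (Or.inl hc)]
  rw [sub_self, Real.zero_rpow (by linarith)]
  ring

lemma hlp_right (a b c : ℝ) (hab : a ≤ b) (hc : -1 < c) :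
    ∫⁻ s in Ioo a b, ENNReal.ofReal ((b - s) ^ c) = ENNReal.ofReal ((b - a) ^ (c + 1) / (c + 1)) := by
  have hint : IntervalIntegrable (fun s => (b - s) ^ c) volume a b := by
    have h := (intervalIntegral.intervalIntegrable_rpow' (a := b - b) (b := b - a) hc).comp_sub_left b
    simpa using h.symm
  have hnn : 0 ≤ᶠ[ae (volume.restrict (Ioo a b))] fun s => (b - s) ^ c := by
    rw [Filter.EventuallyLE, ae_restrict_iff' measurableSet_Ioo]
    filter_upwards with s hs
    exact Real.rpow_nonneg (by linarith [hs.2]) _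
  have hio : IntegrableOn (fun s => (b - s) ^ c) (Ioo a b) volume :=
    (hint.1).mono_set Ioo_subset_Ioc_self
  rw [← ofReal_integral_eq_lintegral_ofReal hio hnn]
  congr 1
  rw [← integral_Ioc_eq_integral_Ioo, ← intervalIntegral.integral_of_le hab]
  rw [intervalIntegral.integral_comp_sub_left (fun x => x ^ c) b]
  rw [integral_rpow (Or.inl hc)]
  rw [sub_self, Real.zero_rpow (by linarith)]
  ring

set_option maxHeartbeats 1000000 in
/-- Condition (A5) for fractional kernels (the verification in Remark 2.5 of the paper):
for `T > 0`, `α₁ ∈ (1/2, ∞)`, `α₂ ∈ (0, ∞)` and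
`α' := min(α₁, 2α₂, α₁ + α₂ - 1/2)/2`, there is a constant `C > 0` (depending only on
`α₁`, `α₂`, `T`) such that for all `0 ≤ r ≤ r' ≤ t ≤ T`,
`∫_r^{r'} (t-s)^{α₁-1} (s-r)^{α₂-1/2} ds ≤ C (r'-r)^{min(2α',1)}`. -/
theorem fractional_kernel_A5 (T α₁ α₂ : ℝ) (hT : 0 < T) (hα₁ : 1/2 < α₁) (hα₂ : 0 < α₂) :
    ∃ C : ℝ, 0 < C ∧
      ∀ r r' t : ℝ, 0 ≤ r → r ≤ r' → r' ≤ t → t ≤ T →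
        (∫⁻ s in Ioo r r',
            ENNReal.ofReal ((t - s) ^ (α₁ - 1) * (s - r) ^ (α₂ - 1/2))) ≤
          ENNReal.ofReal
            (C * (r' - r) ^
              min (2 * (min α₁ (min (2 * α₂) (α₁ + α₂ - 1/2)) / 2)) 1) := by
  obtain ⟨e, hedef⟩ : ∃ e : ℝ, e = min (2 * (min α₁ (min (2 * α₂) (α₁ + α₂ - 1/2)) / 2)) 1 :=
    ⟨_, rfl⟩
  rw [← hedef]
  have hee : e = min (min α₁ (min (2 * α₂) (α₁ + α₂ - 1/2))) 1 := by
    rw [hedef]; congr 1; ring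
  have hepos : 0 < e := by
    rw [hee]
    exact lt_min (lt_min (by linarith) (lt_min (by linarith) (by linarith))) one_pos
  have he1 : e ≤ α₂ + 1/2 := by
    have h2a : e ≤ 2 * α₂ := by
      rw [hee]
      exact (min_le_left _ _).trans ((min_le_right _ _).trans (min_le_left _ _))
    have h1 : e ≤ 1 := by rw [hee]; exact min_le_right _ _
    rcases le_total α₂ (1/2) with h | h <;> linarith
  have he2 : e ≤ α₁ + α₂ - 1/2 := by
    rw [hee]
    exact (min_le_left _ _).trans ((min_le_right _ _).trans (min_le_right _ _))
  refine ⟨T ^ (α₁ - 1) * (T ^ (α₂ + 1/2 - e) / (α₂ + 1/2)) +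
      (2 ^ (1 - α₁) + 1) * (T ^ (α₁ + α₂ - 1/2 - e) / (α₂ + 1/2)) +
      (2 ^ (1/2 - α₂) + 1) * (T ^ (α₁ + α₂ - 1/2 - e) / α₁), by positivity, ?_⟩
  intro r r' t hr hrr' hr't htT
  rcases eq_or_lt_of_le hrr' with heq | hlt
  · rw [← heq]
    simp only [Ioo_self, Measure.restrict_empty, lintegral_zero_measure]
    exact zero_le
  obtain ⟨δ, hδdef⟩ : ∃ δ : ℝ, δ = r' - r := ⟨_, rfl⟩
  rw [← hδdef]
  have hδ : 0 < δ := by rw [hδdef]; linarith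
  have hδT : δ ≤ T := by rw [hδdef]; linarith
  obtain ⟨m, hmdef⟩ : ∃ m : ℝ, m = (r + r') / 2 := ⟨_, rfl⟩
  have hrm : r < m := by rw [hmdef]; linarith
  have hmr' : m < r' := by rw [hmdef]; linarith
  have hmr : m - r = δ / 2 := by rw [hmdef, hδdef]; ring
  have hr'm : r' - m = δ / 2 := by rw [hmdef, hδdef]; ring
  -- monomial bound
  have mono : ∀ p, e ≤ p → δ ^ p ≤ T ^ (p - e) * δ ^ e := by
    intro p hp
    calc δ ^ p = δ ^ (p - e) * δ ^ e := by rw [← Real.rpow_add hδ]; congr 1; ring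
      _ ≤ T ^ (p - e) * δ ^ e := mul_le_mul_of_nonneg_right
          (Real.rpow_le_rpow hδ.le hδT (by linarith)) (Real.rpow_nonneg hδ.le _)
  -- Step A: pointwise bound splitting the kernel
  have measT : Measurable fun s : ℝ =>
      ENNReal.ofReal (T ^ (α₁ - 1) * (s - r) ^ (α₂ - 1/2)) := by fun_prop
  have keyA : (∫⁻ s in Ioo r r',
        ENNReal.ofReal ((t - s) ^ (α₁ - 1) * (s - r) ^ (α₂ - 1/2))) ≤
      (∫⁻ s in Ioo r r', ENNReal.ofReal (T ^ (α₁ - 1) * (s - r) ^ (α₂ - 1/2))) +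
      (∫⁻ s in Ioo r r', ENNReal.ofReal ((r' - s) ^ (α₁ - 1) * (s - r) ^ (α₂ - 1/2))) := by
    rw [← lintegral_add_left measT]
    apply lintegral_mono_ae
    rw [ae_restrict_iff' measurableSet_Ioo]
    filter_upwards with s hs
    have hsr : r < s := hs.1
    have hsr' : s < r' := hs.2
    have hnn1 : (0:ℝ) ≤ T ^ (α₁ - 1) * (s - r) ^ (α₂ - 1/2) :=
      mul_nonneg (Real.rpow_nonneg hT.le _) (Real.rpow_nonneg (by linarith) _)
    have hnn2 : (0:ℝ) ≤ (r' - s) ^ (α₁ - 1) * (s - r) ^ (α₂ - 1/2) :=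
      mul_nonneg (Real.rpow_nonneg (by linarith) _) (Real.rpow_nonneg (by linarith) _)
    rw [← ENNReal.ofReal_add hnn1 hnn2, ← add_mul]
    apply ENNReal.ofReal_le_ofReal
    apply mul_le_mul_of_nonneg_right _ (Real.rpow_nonneg (by linarith) _)
    rcases le_or_gt 1 α₁ with h1 | h1
    · have hb1 : (0:ℝ) ≤ t - s := by linarith
      have hb2 : t - s ≤ T := by linarith
      have := Real.rpow_le_rpow hb1 hb2 (by linarith : (0:ℝ) ≤ α₁ - 1)
      have h2 : (0:ℝ) ≤ (r' - s) ^ (α₁ - 1) := Real.rpow_nonneg (by linarith) _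
      linarith
    · have hb1 : (0:ℝ) < r' - s := by linarith
      have hb2 : r' - s ≤ t - s := by linarith
      have := Real.rpow_le_rpow_of_nonpos hb1 hb2 (by linarith : α₁ - 1 ≤ 0)
      have h2 : (0:ℝ) ≤ T ^ (α₁ - 1) := Real.rpow_nonneg hT.le _
      linarith
  -- Term A
  have hA : (∫⁻ s in Ioo r r', ENNReal.ofReal (T ^ (α₁ - 1) * (s - r) ^ (α₂ - 1/2))) =
      ENNReal.ofReal (T ^ (α₁ - 1) * (δ ^ (α₂ + 1/2) / (α₂ + 1/2))) := by
    have h := hlp_left r r' (α₂ - 1/2) hrr' (by linarith)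
    rw [show α₂ - 1/2 + 1 = α₂ + 1/2 by ring, ← hδdef] at h
    simp_rw [ENNReal.ofReal_mul (Real.rpow_nonneg hT.le _)]
    rw [lintegral_const_mul' _ _ ENNReal.ofReal_ne_top, h]
  -- Term B split
  have hsub : Ioo r r' ⊆ Ioc r m ∪ Ioo m r' := by
    intro s hs
    rcases le_or_gt s m with h | h
    · exact Or.inl ⟨hs.1, h⟩
    · exact Or.inr ⟨h, hs.2⟩
  have hB : (∫⁻ s in Ioo r r', ENNReal.ofReal ((r' - s) ^ (α₁ - 1) * (s - r) ^ (α₂ - 1/2))) ≤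
      (∫⁻ s in Ioc r m, ENNReal.ofReal ((r' - s) ^ (α₁ - 1) * (s - r) ^ (α₂ - 1/2))) +
      (∫⁻ s in Ioo m r', ENNReal.ofReal ((r' - s) ^ (α₁ - 1) * (s - r) ^ (α₂ - 1/2))) :=
    (lintegral_mono_set hsub).trans (lintegral_union_le _ _ _)
  -- B1
  have hB1 : (∫⁻ s in Ioc r m, ENNReal.ofReal ((r' - s) ^ (α₁ - 1) * (s - r) ^ (α₂ - 1/2))) ≤
      ENNReal.ofReal (((δ/2) ^ (α₁ - 1) + δ ^ (α₁ - 1)) * (δ ^ (α₂ + 1/2) / (α₂ + 1/2))) := by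
    have hK : (0:ℝ) ≤ (δ/2) ^ (α₁ - 1) + δ ^ (α₁ - 1) := by positivity
    have step1 : (∫⁻ s in Ioc r m, ENNReal.ofReal ((r' - s) ^ (α₁ - 1) * (s - r) ^ (α₂ - 1/2))) ≤
        ∫⁻ s in Ioc r m,
          ENNReal.ofReal (((δ/2) ^ (α₁ - 1) + δ ^ (α₁ - 1)) * (s - r) ^ (α₂ - 1/2)) := by
      apply lintegral_mono_ae
      rw [ae_restrict_iff' measurableSet_Ioc]
      filter_upwards with s hs
      apply ENNReal.ofReal_le_ofReal
      apply mul_le_mul_of_nonneg_right _ (Real.rpow_nonneg (by linarith [hs.1]) _)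
      have h1 : δ/2 ≤ r' - s := by rw [← hr'm]; linarith [hs.2]
      have h2 : r' - s ≤ δ := by rw [hδdef]; linarith [hs.1]
      rcases le_or_gt 1 α₁ with ha | ha
      · have := Real.rpow_le_rpow (x := r' - s) (by linarith) h2 (by linarith : (0:ℝ) ≤ α₁ - 1)
        have h3 : (0:ℝ) ≤ (δ/2) ^ (α₁ - 1) := by positivity
        linarith
      · have := Real.rpow_le_rpow_of_nonpos (x := δ/2) (by positivity) h1
          (by linarith : α₁ - 1 ≤ 0)
        have h3 : (0:ℝ) ≤ δ ^ (α₁ - 1) := by positivity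
        linarith
    have h := hlp_left r m (α₂ - 1/2) hrm.le (by linarith)
    rw [show α₂ - 1/2 + 1 = α₂ + 1/2 by ring, hmr] at h
    calc (∫⁻ s in Ioc r m, ENNReal.ofReal ((r' - s) ^ (α₁ - 1) * (s - r) ^ (α₂ - 1/2)))
        ≤ ∫⁻ s in Ioc r m,
            ENNReal.ofReal (((δ/2) ^ (α₁ - 1) + δ ^ (α₁ - 1)) * (s - r) ^ (α₂ - 1/2)) := step1
      _ = ENNReal.ofReal ((δ/2) ^ (α₁ - 1) + δ ^ (α₁ - 1)) *
            ∫⁻ s in Ioc r m, ENNReal.ofReal ((s - r) ^ (α₂ - 1/2)) := by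
          simp_rw [ENNReal.ofReal_mul hK]
          rw [lintegral_const_mul' _ _ ENNReal.ofReal_ne_top]
      _ = ENNReal.ofReal ((δ/2) ^ (α₁ - 1) + δ ^ (α₁ - 1)) *
            ENNReal.ofReal ((δ/2) ^ (α₂ + 1/2) / (α₂ + 1/2)) := by
          rw [Measure.restrict_congr_set Ioo_ae_eq_Ioc.symm, h]
      _ ≤ ENNReal.ofReal ((δ/2) ^ (α₁ - 1) + δ ^ (α₁ - 1)) *
            ENNReal.ofReal (δ ^ (α₂ + 1/2) / (α₂ + 1/2)) := by
          apply mul_le_mul_right (ENNReal.ofReal_le_ofReal _)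
          apply div_le_div_of_nonneg_right ?_ (by linarith)
          · exact Real.rpow_le_rpow (by positivity) (by linarith) (by linarith)
      _ = ENNReal.ofReal (((δ/2) ^ (α₁ - 1) + δ ^ (α₁ - 1)) * (δ ^ (α₂ + 1/2) / (α₂ + 1/2))) := by
          rw [← ENNReal.ofReal_mul hK]
  -- B2
  have hB2 : (∫⁻ s in Ioo m r', ENNReal.ofReal ((r' - s) ^ (α₁ - 1) * (s - r) ^ (α₂ - 1/2))) ≤
      ENNReal.ofReal (((δ/2) ^ (α₂ - 1/2) + δ ^ (α₂ - 1/2)) * (δ ^ α₁ / α₁)) := by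
    have hK : (0:ℝ) ≤ (δ/2) ^ (α₂ - 1/2) + δ ^ (α₂ - 1/2) := by positivity
    have step1 : (∫⁻ s in Ioo m r', ENNReal.ofReal ((r' - s) ^ (α₁ - 1) * (s - r) ^ (α₂ - 1/2))) ≤
        ∫⁻ s in Ioo m r',
          ENNReal.ofReal (((δ/2) ^ (α₂ - 1/2) + δ ^ (α₂ - 1/2)) * (r' - s) ^ (α₁ - 1)) := by
      apply lintegral_mono_ae
      rw [ae_restrict_iff' measurableSet_Ioo]
      filter_upwards with s hs
      apply ENNReal.ofReal_le_ofReal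
      rw [mul_comm ((r' - s) ^ (α₁ - 1))]
      apply mul_le_mul_of_nonneg_right _ (Real.rpow_nonneg (by linarith [hs.2]) _)
      have h1 : δ/2 ≤ s - r := by rw [← hmr]; linarith [hs.1]
      have h2 : s - r ≤ δ := by rw [hδdef]; linarith [hs.2]
      rcases le_or_gt (1/2) α₂ with ha | ha
      · have := Real.rpow_le_rpow (x := s - r) (by linarith) h2 (by linarith : (0:ℝ) ≤ α₂ - 1/2)
        have h3 : (0:ℝ) ≤ (δ/2) ^ (α₂ - 1/2) := by positivity
        linarith
      · have := Real.rpow_le_rpow_of_nonpos (x := δ/2) (by positivity) h1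
          (by linarith : α₂ - 1/2 ≤ 0)
        have h3 : (0:ℝ) ≤ δ ^ (α₂ - 1/2) := by positivity
        linarith
    have h := hlp_right m r' (α₁ - 1) hmr'.le (by linarith)
    rw [show α₁ - 1 + 1 = α₁ by ring, hr'm] at h
    calc (∫⁻ s in Ioo m r', ENNReal.ofReal ((r' - s) ^ (α₁ - 1) * (s - r) ^ (α₂ - 1/2)))
        ≤ ∫⁻ s in Ioo m r',
            ENNReal.ofReal (((δ/2) ^ (α₂ - 1/2) + δ ^ (α₂ - 1/2)) * (r' - s) ^ (α₁ - 1)) := step1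
      _ = ENNReal.ofReal ((δ/2) ^ (α₂ - 1/2) + δ ^ (α₂ - 1/2)) *
            ∫⁻ s in Ioo m r', ENNReal.ofReal ((r' - s) ^ (α₁ - 1)) := by
          simp_rw [ENNReal.ofReal_mul hK]
          rw [lintegral_const_mul' _ _ ENNReal.ofReal_ne_top]
      _ = ENNReal.ofReal ((δ/2) ^ (α₂ - 1/2) + δ ^ (α₂ - 1/2)) *
            ENNReal.ofReal ((δ/2) ^ α₁ / α₁) := by rw [h]
      _ ≤ ENNReal.ofReal ((δ/2) ^ (α₂ - 1/2) + δ ^ (α₂ - 1/2)) *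
            ENNReal.ofReal (δ ^ α₁ / α₁) := by
          apply mul_le_mul_right (ENNReal.ofReal_le_ofReal _)
          apply div_le_div_of_nonneg_right ?_ (by linarith)
          · exact Real.rpow_le_rpow (by positivity) (by linarith) (by linarith)
      _ = ENNReal.ofReal (((δ/2) ^ (α₂ - 1/2) + δ ^ (α₂ - 1/2)) * (δ ^ α₁ / α₁)) := by
          rw [← ENNReal.ofReal_mul hK]
  -- combine
  refine (keyA.trans (add_le_add hA.le (hB.trans (add_le_add hB1 hB2)))).trans ?_
  rw [← ENNReal.ofReal_add (by positivity) (by positivity),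
    ← ENNReal.ofReal_add (by positivity) (by positivity)]
  apply ENNReal.ofReal_le_ofReal
  -- now a real inequality
  have hhalf : (δ/2) ^ (α₁ - 1) = 2 ^ (1 - α₁) * δ ^ (α₁ - 1) := by
    rw [Real.div_rpow hδ.le (by norm_num), div_eq_mul_inv, mul_comm,
      ← Real.rpow_neg (by norm_num), show -(α₁ - 1) = 1 - α₁ by ring]
  have hhalf2 : (δ/2) ^ (α₂ - 1/2) = 2 ^ (1/2 - α₂) * δ ^ (α₂ - 1/2) := by
    rw [Real.div_rpow hδ.le (by norm_num), div_eq_mul_inv, mul_comm,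
      ← Real.rpow_neg (by norm_num), show -(α₂ - 1/2) = 1/2 - α₂ by ring]
  have hmul1 : δ ^ (α₁ - 1) * δ ^ (α₂ + 1/2) = δ ^ (α₁ + α₂ - 1/2) := by
    rw [← Real.rpow_add hδ]; ring_nf
  have hmul2 : δ ^ (α₂ - 1/2) * δ ^ α₁ = δ ^ (α₁ + α₂ - 1/2) := by
    rw [← Real.rpow_add hδ]; ring_nf
  have hm1 := mono (α₂ + 1/2) he1
  have hm2 := mono (α₁ + α₂ - 1/2) he2
  have hT1 : (0:ℝ) ≤ T ^ (α₁ - 1) := Real.rpow_nonneg hT.le _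
  have h21 : (0:ℝ) < 2 ^ (1 - α₁) := by positivity
  have h22 : (0:ℝ) < 2 ^ (1/2 - α₂) := by positivity
  have hα₂' : (0:ℝ) < α₂ + 1/2 := by linarith
  have hα₁' : (0:ℝ) < α₁ := by linarith
  rw [hhalf, hhalf2, ← add_assoc]
  have t1 : T ^ (α₁ - 1) * (δ ^ (α₂ + 1/2) / (α₂ + 1/2)) ≤
      T ^ (α₁ - 1) * (T ^ (α₂ + 1/2 - e) / (α₂ + 1/2)) * δ ^ e := by
    rw [mul_assoc, div_mul_eq_mul_div]
    apply mul_le_mul_of_nonneg_left _ hT1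
    exact div_le_div_of_nonneg_right hm1 hα₂'.le
  have t2 : (2 ^ (1 - α₁) * δ ^ (α₁ - 1) + δ ^ (α₁ - 1)) * (δ ^ (α₂ + 1/2) / (α₂ + 1/2)) ≤
      (2 ^ (1 - α₁) + 1) * (T ^ (α₁ + α₂ - 1/2 - e) / (α₂ + 1/2)) * δ ^ e := by
    have heq : (2 ^ (1 - α₁) * δ ^ (α₁ - 1) + δ ^ (α₁ - 1)) * (δ ^ (α₂ + 1/2) / (α₂ + 1/2)) =
        (2 ^ (1 - α₁) + 1) * (δ ^ (α₁ + α₂ - 1/2) / (α₂ + 1/2)) := by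
      rw [← hmul1]; field_simp
    rw [heq, mul_assoc, div_mul_eq_mul_div]
    apply mul_le_mul_of_nonneg_left _ (by positivity)
    exact div_le_div_of_nonneg_right hm2 hα₂'.le
  have t3 : (2 ^ (1/2 - α₂) * δ ^ (α₂ - 1/2) + δ ^ (α₂ - 1/2)) * (δ ^ α₁ / α₁) ≤
      (2 ^ (1/2 - α₂) + 1) * (T ^ (α₁ + α₂ - 1/2 - e) / α₁) * δ ^ e := by
    have heq : (2 ^ (1/2 - α₂) * δ ^ (α₂ - 1/2) + δ ^ (α₂ - 1/2)) * (δ ^ α₁ / α₁) =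
        (2 ^ (1/2 - α₂) + 1) * (δ ^ (α₁ + α₂ - 1/2) / α₁) := by
      rw [← hmul2]; field_simp
    rw [heq, mul_assoc, div_mul_eq_mul_div]
    apply mul_le_mul_of_nonneg_left _ (by positivity)
    exact div_le_div_of_nonneg_right hm2 hα₁'.le
  calc T ^ (α₁ - 1) * (δ ^ (α₂ + 1/2) / (α₂ + 1/2)) +
        (2 ^ (1 - α₁) * δ ^ (α₁ - 1) + δ ^ (α₁ - 1)) * (δ ^ (α₂ + 1/2) / (α₂ + 1/2)) +
        (2 ^ (1/2 - α₂) * δ ^ (α₂ - 1/2) + δ ^ (α₂ - 1/2)) * (δ ^ α₁ / α₁)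
      ≤ T ^ (α₁ - 1) * (T ^ (α₂ + 1/2 - e) / (α₂ + 1/2)) * δ ^ e +
        (2 ^ (1 - α₁) + 1) * (T ^ (α₁ + α₂ - 1/2 - e) / (α₂ + 1/2)) * δ ^ e +
        (2 ^ (1/2 - α₂) + 1) * (T ^ (α₁ + α₂ - 1/2 - e) / α₁) * δ ^ e := by
        exact add_le_add (add_le_add t1 t2) t3
    _ = (T ^ (α₁ - 1) * (T ^ (α₂ + 1/2 - e) / (α₂ + 1/2)) +
        (2 ^ (1 - α₁) + 1) * (T ^ (α₁ + α₂ - 1/2 - e) / (α₂ + 1/2)) +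
        (2 ^ (1/2 - α₂) + 1) * (T ^ (α₁ + α₂ - 1/2 - e) / α₁)) * δ ^ e := by ring
end

section
/- Abstract uniform-norm convergence rate (the analytical core of the paper's Theorems 2.3(ii) and 2.6(ii)): Let T > 0, a ∈ (0,1], p > 1/a, ε ∈ (1/p, a), K ≥ 0 and δ ∈ (0,1]. Let X and Z be continuous ℝ^d-valued stochastic processes on [0,T] on a common probability space such that for all s, t ∈ [0,T]: E[|X_t − X_s|^p] ≤ K |t−s|^{ap}, E[|Z_t − Z_s|^p] ≤ K |t−s|^{ap}, and E[|X_t − Z_t|^p] ≤ K δ^{ap}. Then there exists a constant C > 0, depending only on d, p, a, ε and T (in particular not on X, Z, K or δ), such that ( E[ sup_{t∈[0,T]} |X_t − Z_t|^p ] )^{1/p} ≤ C K^{1/p} δ^{a−ε}. -/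
set_option maxHeartbeats 1000000

open MeasureTheory Set


lemma my_iSup_rpow {ι : Type*} (f : ι → ENNReal) {p : ℝ} (hp : 0 < p) :
    (⨆ i, f i) ^ p = ⨆ i, f i ^ p := by
  rcases isEmpty_or_nonempty ι with h | h
  · simp [iSup_of_empty, ENNReal.zero_rpow_of_pos hp]
  refine le_antisymm ?_ (iSup_le fun i => ENNReal.rpow_le_rpow (le_iSup f i) hp.le)
  have h1 : (⨆ i, f i) ≤ (⨆ i, f i ^ p) ^ (1 / p) := by
    refine iSup_le fun i => ?_
    have : f i = (f i ^ p) ^ (1 / p) := by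
      rw [← ENNReal.rpow_mul, mul_one_div_cancel hp.ne', ENNReal.rpow_one]
    rw [this]
    exact ENNReal.rpow_le_rpow (le_iSup (fun i => f i ^ p) i) (by positivity)
  calc (⨆ i, f i) ^ p ≤ ((⨆ i, f i ^ p) ^ (1 / p)) ^ p := ENNReal.rpow_le_rpow h1 hp.le
    _ = ⨆ i, f i ^ p := by rw [← ENNReal.rpow_mul, one_div_mul_cancel hp.ne', ENNReal.rpow_one]

lemma my_minkowski_tsum {α : Type*} [MeasurableSpace α] (μ : Measure α) {p : ℝ} (hp : 1 ≤ p)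
    (f : ℕ → α → ENNReal) (hf : ∀ n, Measurable (f n)) :
    (∫⁻ a, (∑' n, f n a) ^ p ∂μ) ^ (1 / p) ≤ ∑' n, (∫⁻ a, f n a ^ p ∂μ) ^ (1 / p) := by
  have hp0 : 0 < p := lt_of_lt_of_le one_pos hp
  have hfin : ∀ m, (∫⁻ a, (∑ n ∈ Finset.range m, f n a) ^ p ∂μ) ^ (1 / p) ≤
      ∑' n, (∫⁻ a, f n a ^ p ∂μ) ^ (1 / p) := by
    intro m
    have key : ∀ m, (∫⁻ a, (∑ n ∈ Finset.range m, f n a) ^ p ∂μ) ^ (1 / p) ≤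
        ∑ n ∈ Finset.range m, (∫⁻ a, f n a ^ p ∂μ) ^ (1 / p) := by
      intro m
      induction m with
      | zero =>
        simp only [Finset.range_zero, Finset.sum_empty]
        rw [ENNReal.zero_rpow_of_pos hp0, lintegral_zero,
          ENNReal.zero_rpow_of_pos (by positivity : (0:ℝ) < 1/p)]
      | succ m ih =>
        have h1 : (∫⁻ a, (∑ n ∈ Finset.range (m+1), f n a) ^ p ∂μ) ^ (1 / p) ≤
            (∫⁻ a, (∑ n ∈ Finset.range m, f n a) ^ p ∂μ) ^ (1 / p) +
            (∫⁻ a, f m a ^ p ∂μ) ^ (1 / p) := by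
          have := ENNReal.lintegral_Lp_add_le (μ := μ)
            (f := fun a => ∑ n ∈ Finset.range m, f n a) (g := f m)
            (Finset.measurable_sum _ fun n _ => hf n).aemeasurable (hf m).aemeasurable hp
          simpa [Finset.sum_range_succ] using this
        calc _ ≤ _ := h1
          _ ≤ _ := by rw [Finset.sum_range_succ]; exact add_le_add_left ih _
    exact (key m).trans (ENNReal.sum_le_tsum _)
  have hmono : Monotone fun m => fun a => (∑ n ∈ Finset.range m, f n a) ^ p :=
    fun m m' h a => ENNReal.rpow_le_rpow
      (Finset.sum_le_sum_of_subset (Finset.range_subset_range.2 h)) hp0.le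
  have heq : (∫⁻ a, (∑' n, f n a) ^ p ∂μ) =
      ⨆ m, ∫⁻ a, (∑ n ∈ Finset.range m, f n a) ^ p ∂μ := by
    rw [← lintegral_iSup (fun m => ((Finset.measurable_sum _ fun n _ => hf n)).pow_const p)
      (fun m m' h => hmono h)]
    congr 1
    ext a
    have h2 : (∑' n, f n a) = ⨆ m, ∑ n ∈ Finset.range m, f n a :=
      ENNReal.tsum_eq_iSup_sum' _ fun s => Finset.exists_nat_subset_range s
    rw [h2, my_iSup_rpow _ hp0]
  rw [heq, my_iSup_rpow _ (by positivity : (0:ℝ) < 1/p)]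
  exact iSup_le hfin


lemma my_chaining {E : Type*} [NormedAddCommGroup E] {T : ℝ} (hT : 0 < T)
    (f : ℝ → E) (hf : ContinuousOn f (Icc 0 T)) (N : ℕ) {t : ℝ} (ht : t ∈ Icc 0 T) :
    ENNReal.ofReal ‖f t‖ ≤
      (⨆ k ∈ Finset.range (2 ^ N + 1), ENNReal.ofReal ‖f ((k : ℝ) * T / 2 ^ N)‖) +
      ∑' m : ℕ, ⨆ k ∈ Finset.range (2 ^ (N + 1 + m)),
        ENNReal.ofReal ‖f (((k : ℝ) + 1) * T / 2 ^ (N + 1 + m)) -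
          f ((k : ℝ) * T / 2 ^ (N + 1 + m))‖ := by
  obtain ⟨ht0, htT⟩ := ht
  set M : ℕ → ENNReal := fun n => ⨆ k ∈ Finset.range (2 ^ n),
    ENNReal.ofReal ‖f (((k : ℝ) + 1) * T / 2 ^ n) - f ((k : ℝ) * T / 2 ^ n)‖ with hM
  set kk : ℕ → ℕ := fun n => ⌊t * 2 ^ n / T⌋₊ with hkk
  set u : ℕ → ℝ := fun n => (kk n : ℝ) * T / 2 ^ n with hu
  have hx0 : ∀ n : ℕ, 0 ≤ t * 2 ^ n / T := fun n => by positivity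
  have hkk_le : ∀ n, kk n ≤ 2 ^ n := by
    intro n
    have : t * 2 ^ n / T ≤ (2 ^ n : ℝ) := by
      rw [div_le_iff₀ hT]
      calc t * 2 ^ n ≤ T * 2 ^ n := by nlinarith [pow_pos (by norm_num : (0:ℝ) < 2) n]
        _ = (2:ℝ) ^ n * T := by ring
    calc kk n ≤ ⌊((2 ^ n : ℕ) : ℝ)⌋₊ := by
          apply Nat.floor_le_floor; push_cast; exact this
      _ = 2 ^ n := Nat.floor_natCast _
  have hu_mem : ∀ n, u n ∈ Icc 0 T := by
    intro n
    constructor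
    · positivity
    · rw [hu, div_le_iff₀ (by positivity)]
      calc (kk n : ℝ) * T ≤ (2 ^ n : ℝ) * T := by
            have := hkk_le n
            have : (kk n : ℝ) ≤ (2:ℝ) ^ n := by exact_mod_cast this
            nlinarith
        _ = T * 2 ^ n := by ring
  have hu_le : ∀ n, u n ≤ t := by
    intro n
    rw [hu, div_le_iff₀ (by positivity), mul_comm t]
    have h1 : (kk n : ℝ) ≤ t * 2 ^ n / T := Nat.floor_le (hx0 n)
    calc (kk n : ℝ) * T ≤ t * 2 ^ n / T * T := by nlinarith
      _ = 2 ^ n * t := by field_simp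
  have hu_close : ∀ n, t - u n ≤ T / 2 ^ n := by
    intro n
    have h1 : t * 2 ^ n / T < (kk n : ℝ) + 1 := Nat.lt_floor_add_one _
    have h2 : t * 2 ^ n < ((kk n : ℝ) + 1) * T := by
      rw [div_lt_iff₀ hT] at h1; linarith
    have e : u n * 2 ^ n = (kk n : ℝ) * T := by
      rw [hu]; field_simp
    rw [le_div_iff₀ (by positivity : (0:ℝ) < 2 ^ n)]
    have e2 : (t - u n) * 2 ^ n = t * 2 ^ n - u n * 2 ^ n := by ring
    linarith
  have hu_tendsto : Filter.Tendsto u Filter.atTop (nhds t) := by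
    have hlow : Filter.Tendsto (fun n : ℕ => t - T * (1/2 : ℝ) ^ n) Filter.atTop (nhds (t - T * 0)) :=
      Filter.Tendsto.const_sub _ (Filter.Tendsto.const_mul _
        (tendsto_pow_atTop_nhds_zero_of_lt_one (by norm_num) (by norm_num)))
    rw [mul_zero, sub_zero] at hlow
    refine tendsto_of_tendsto_of_tendsto_of_le_of_le hlow tendsto_const_nhds ?_ ?_
    · intro n
      have h := hu_close n
      have e : T * (1/2:ℝ)^n = T / 2^n := by
        rw [one_div, inv_pow]; ring
      show t - T * (1/2:ℝ)^n ≤ u n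
      rw [e]; linarith
    · exact hu_le
  -- doubling of floors
  have hkk_step : ∀ n, kk (n+1) = 2 * kk n ∨ kk (n+1) = 2 * kk n + 1 := by
    intro n
    have hxnn : 0 ≤ t * 2 ^ n / T := hx0 n
    have hkn1 : kk (n+1) = ⌊2 * (t * 2 ^ n / T)⌋₊ := by
      show ⌊t * 2 ^ (n+1) / T⌋₊ = ⌊2 * (t * 2 ^ n / T)⌋₊
      congr 1
      ring
    have h1 : 2 * ⌊t * 2 ^ n / T⌋₊ ≤ ⌊2 * (t * 2 ^ n / T)⌋₊ := by
      apply Nat.le_floor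
      push_cast
      linarith [Nat.floor_le hxnn]
    have h2 : ⌊2 * (t * 2 ^ n / T)⌋₊ < 2 * ⌊t * 2 ^ n / T⌋₊ + 2 := by
      rw [Nat.floor_lt (by positivity)]
      push_cast
      linarith [Nat.lt_floor_add_one (t * 2 ^ n / T)]
    have hkn : kk n = ⌊t * 2 ^ n / T⌋₊ := rfl
    omega
  -- increment bound
  have hstep : ∀ n, ENNReal.ofReal ‖f (u (n+1)) - f (u n)‖ ≤ M (n+1) := by
    intro n
    rcases hkk_step n with h | h
    · have : u (n+1) = u n := by
        rw [hu]; simp only []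
        rw [h]; push_cast; ring
      rw [this]; simp
    · have hub : 2 * kk n < 2 ^ (n+1) := by
        have := hkk_le (n+1); omega
      have e1 : u (n+1) = (((2 * kk n : ℕ) : ℝ) + 1) * T / 2 ^ (n+1) := by
        rw [hu]; simp only []
        rw [h]; push_cast; ring
      have e2 : u n = ((2 * kk n : ℕ) : ℝ) * T / 2 ^ (n+1) := by
        rw [hu]; simp only []
        push_cast; ring
      rw [e1, e2, hM]
      refine le_trans ?_ (le_iSup₂ (f := fun k (_ : k ∈ Finset.range (2 ^ (n+1))) =>
        ENNReal.ofReal ‖f (((k : ℝ) + 1) * T / 2 ^ (n+1)) - f ((k : ℝ) * T / 2 ^ (n+1))‖)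
        (2 * kk n) (Finset.mem_range.2 hub))
      exact le_refl _
  -- telescoping
  have htel : ∀ m, ENNReal.ofReal ‖f (u (N+m)) - f (u N)‖ ≤
      ∑' j : ℕ, M (N + 1 + j) := by
    intro m
    have key : ∀ m, ENNReal.ofReal ‖f (u (N+m)) - f (u N)‖ ≤
        ∑ j ∈ Finset.range m, M (N + 1 + j) := by
      intro m
      induction m with
      | zero => simp
      | succ m ih =>
        have tri : ‖f (u (N+m+1)) - f (u N)‖ ≤
            ‖f (u (N+m+1)) - f (u (N+m))‖ + ‖f (u (N+m)) - f (u N)‖ := by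
          have := norm_sub_le_norm_sub_add_norm_sub (f (u (N+m+1))) (f (u (N+m))) (f (u N))
          linarith
        calc ENNReal.ofReal ‖f (u (N+(m+1))) - f (u N)‖
            ≤ ENNReal.ofReal (‖f (u (N+m+1)) - f (u (N+m))‖ + ‖f (u (N+m)) - f (u N)‖) := by
              apply ENNReal.ofReal_le_ofReal
              show ‖f (u (N+(m+1))) - f (u N)‖ ≤ _
              have : N + (m+1) = N + m + 1 := by omega
              rw [this]; exact tri
          _ ≤ ENNReal.ofReal ‖f (u (N+m+1)) - f (u (N+m))‖ +
              ENNReal.ofReal ‖f (u (N+m)) - f (u N)‖ := ENNReal.ofReal_add_le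
          _ ≤ M (N+m+1) + ∑ j ∈ Finset.range m, M (N + 1 + j) := by
              gcongr
              · exact hstep (N+m)
          _ = ∑ j ∈ Finset.range (m+1), M (N + 1 + j) := by
              rw [Finset.sum_range_succ]
              have : N + 1 + m = N + m + 1 := by omega
              rw [this]; ring
    exact (key m).trans (ENNReal.sum_le_tsum _)
  -- limit
  have hlim : ENNReal.ofReal ‖f t - f (u N)‖ ≤ ∑' j : ℕ, M (N + 1 + j) := by
    have hconv : Filter.Tendsto (fun m : ℕ => ENNReal.ofReal ‖f (u (N+m)) - f (u N)‖)
        Filter.atTop (nhds (ENNReal.ofReal ‖f t - f (u N)‖)) := by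
      have haux : Filter.Tendsto (fun m : ℕ => N + m) Filter.atTop Filter.atTop := by
        simpa [Nat.add_comm] using Filter.tendsto_add_atTop_nat N
      have h1 : Filter.Tendsto (fun m : ℕ => u (N+m)) Filter.atTop (nhds t) :=
        hu_tendsto.comp haux
      have h2 : Filter.Tendsto (fun m : ℕ => u (N+m)) Filter.atTop (nhdsWithin t (Icc 0 T)) := by
        rw [tendsto_nhdsWithin_iff]
        exact ⟨h1, Filter.Eventually.of_forall fun m => hu_mem _⟩
      have h3 : Filter.Tendsto (fun m : ℕ => f (u (N+m))) Filter.atTop (nhds (f t)) :=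
        (hf t ⟨ht0, htT⟩).tendsto.comp h2
      exact (ENNReal.continuous_ofReal.tendsto _).comp
        (((h3.sub tendsto_const_nhds).norm))
    exact le_of_tendsto hconv (Filter.Eventually.of_forall htel)
  -- conclusion
  have tri : ENNReal.ofReal ‖f t‖ ≤ ENNReal.ofReal ‖f (u N)‖ + ENNReal.ofReal ‖f t - f (u N)‖ := by
    refine le_trans (ENNReal.ofReal_le_ofReal ?_) ENNReal.ofReal_add_le
    have := norm_sub_norm_le (f t) (f (u N))
    linarith [norm_nonneg (f t - f (u N)), norm_nonneg (f (u N))]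
  have hgrid : ENNReal.ofReal ‖f (u N)‖ ≤
      ⨆ k ∈ Finset.range (2 ^ N + 1), ENNReal.ofReal ‖f ((k : ℝ) * T / 2 ^ N)‖ := by
    refine le_trans ?_ (le_iSup₂ (f := fun k (_ : k ∈ Finset.range (2 ^ N + 1)) =>
      ENNReal.ofReal ‖f ((k : ℝ) * T / 2 ^ N)‖) (kk N)
      (Finset.mem_range.2 (by have := hkk_le N; omega)))
    rw [hu]
  exact tri.trans (add_le_add hgrid hlim)



lemma my_sup_pow_le_sum {n : ℕ} (x : ℕ → ENNReal) {p : ℝ} (hp : 0 < p) :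
    (⨆ k ∈ Finset.range n, x k) ^ p ≤ ∑ k ∈ Finset.range n, x k ^ p := by
  have h1 : (⨆ k ∈ Finset.range n, x k) ≤ (∑ k ∈ Finset.range n, x k ^ p) ^ (1/p) := by
    refine iSup₂_le fun k hk => ?_
    have he : x k = (x k ^ p) ^ (1/p) := by
      rw [← ENNReal.rpow_mul, mul_one_div_cancel hp.ne', ENNReal.rpow_one]
    rw [he]
    exact ENNReal.rpow_le_rpow (Finset.single_le_sum (f := fun j => x j ^ p) (fun j _ => zero_le) hk) (by positivity)
  calc (⨆ k ∈ Finset.range n, x k) ^ p ≤ ((∑ k ∈ Finset.range n, x k ^ p) ^ (1/p)) ^ p :=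
        ENNReal.rpow_le_rpow h1 hp.le
    _ = _ := by rw [← ENNReal.rpow_mul, one_div_mul_cancel hp.ne', ENNReal.rpow_one]

lemma my_real_pow_add {b c p : ℝ} (hb : 0 ≤ b) (hc : 0 ≤ c) (hp : 0 ≤ p) :
    (b + c) ^ p ≤ 2 ^ p * (b ^ p + c ^ p) := by
  have h2 : (0:ℝ) ≤ 2 ^ p := Real.rpow_nonneg (by norm_num) p
  rcases le_total b c with h | h
  · calc (b + c) ^ p ≤ (2 * c) ^ p := Real.rpow_le_rpow (by linarith) (by linarith) hp
      _ = 2 ^ p * c ^ p := Real.mul_rpow (by norm_num) hc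
      _ ≤ 2 ^ p * (b ^ p + c ^ p) := by
          have := Real.rpow_nonneg hb p; nlinarith
  · calc (b + c) ^ p ≤ (2 * b) ^ p := Real.rpow_le_rpow (by linarith) (by linarith) hp
      _ = 2 ^ p * b ^ p := Real.mul_rpow (by norm_num) hb
      _ ≤ 2 ^ p * (b ^ p + c ^ p) := by
          have := Real.rpow_nonneg hc p; nlinarith

lemma my_term_calc {T a p : ℝ} (hT : 0 < T) (ha : 0 < a) (hp : 0 < p) (n : ℕ) :
    ((2:ℝ) ^ n * ((2:ℝ) ^ (p+1) * (T / 2 ^ n) ^ (a*p))) ^ (1/p)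
      = 2 ^ ((p+1)/p) * T ^ a * ((2:ℝ) ^ (1/p - a)) ^ n := by
  have h2n : (0:ℝ) < (2:ℝ) ^ n := by positivity
  have hTn : (0:ℝ) < T / 2 ^ n := by positivity
  have hab : ∀ x y : ℝ, (2:ℝ)^x * (2:ℝ)^y = 2^(x+y) := fun x y => (Real.rpow_add two_pos x y).symm
  have hsub : ∀ x y : ℝ, (2:ℝ)^x / (2:ℝ)^y = 2^(x-y) := fun x y => (Real.rpow_sub two_pos x y).symm
  have e1 : a * p * (1/p) = a := by field_simp
  rw [Real.mul_rpow (by positivity) (by positivity),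
      Real.mul_rpow (by positivity) (by positivity),
      ← Real.rpow_mul hTn.le, e1,
      Real.div_rpow hT.le h2n.le,
      ← Real.rpow_natCast (2:ℝ) n,
      ← Real.rpow_mul (by norm_num : (0:ℝ) ≤ 2),
      ← Real.rpow_mul (by norm_num : (0:ℝ) ≤ 2),
      ← Real.rpow_mul (by norm_num : (0:ℝ) ≤ 2),
      ← Real.rpow_natCast ((2:ℝ) ^ (1/p - a)) n,
      ← Real.rpow_mul (by norm_num : (0:ℝ) ≤ 2)]
  have step : (2:ℝ) ^ ((n:ℝ) * (1/p)) * ((2:ℝ) ^ ((p+1) * (1/p)) * (T ^ a / (2:ℝ) ^ ((n:ℝ) * a)))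
      = T ^ a * ((2:ℝ) ^ ((n:ℝ) * (1/p)) * (2:ℝ) ^ ((p+1) * (1/p)) / (2:ℝ) ^ ((n:ℝ) * a)) := by
    ring
  rw [step, hab, hsub]
  have e2 : (n:ℝ) * (1/p) + (p+1) * (1/p) - (n:ℝ) * a = (p+1)/p + (1/p - a) * (n:ℝ) := by
    ring
  rw [e2, ← hab]
  ring

/-- Abstract uniform-norm convergence rate (the analytical core of Theorems 2.3(ii)
and 2.6(ii) of the paper): if `E[|X_t - X_s|^p] ≤ K|t-s|^{ap}`,
`E[|Z_t - Z_s|^p] ≤ K|t-s|^{ap}` and `E[|X_t - Z_t|^p] ≤ K δ^{ap}` on `[0,T]`, with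
`a ∈ (0,1]`, `p > 1/a`, `ε ∈ (1/p, a)`, `δ ∈ (0,1]`, then there is a constant `C > 0`
depending only on `d`, `p`, `a`, `ε` and `T` such that
`(E[sup_{t∈[0,T]} |X_t - Z_t|^p])^{1/p} ≤ C K^{1/p} δ^{a-ε}`. -/
theorem uniform_norm_convergence_rate
    (d : ℕ) (T a p ε : ℝ) (hT : 0 < T) (ha : a ∈ Ioc (0 : ℝ) 1)
    (hp : 1 / a < p) (hε : ε ∈ Ioo (1 / p) a) :
    ∃ C : ℝ, 0 < C ∧
      ∀ (Ω : Type) [MeasureSpace Ω], IsProbabilityMeasure (volume : Measure Ω) →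
      ∀ (X Z : Ω → ℝ → EuclideanSpace ℝ (Fin d)) (K δ : ℝ),
        0 ≤ K → δ ∈ Ioc (0 : ℝ) 1 →
        (∀ ω, ContinuousOn (X ω) (Icc 0 T)) →
        (∀ ω, ContinuousOn (Z ω) (Icc 0 T)) →
        (∀ t, Measurable fun ω => X ω t) →
        (∀ t, Measurable fun ω => Z ω t) →
        (∀ s ∈ Icc (0 : ℝ) T, ∀ t ∈ Icc (0 : ℝ) T,
          (∫⁻ ω, ENNReal.ofReal (‖X ω t - X ω s‖ ^ p)) ≤
            ENNReal.ofReal (K * |t - s| ^ (a * p))) →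
        (∀ s ∈ Icc (0 : ℝ) T, ∀ t ∈ Icc (0 : ℝ) T,
          (∫⁻ ω, ENNReal.ofReal (‖Z ω t - Z ω s‖ ^ p)) ≤
            ENNReal.ofReal (K * |t - s| ^ (a * p))) →
        (∀ t ∈ Icc (0 : ℝ) T,
          (∫⁻ ω, ENNReal.ofReal (‖X ω t - Z ω t‖ ^ p)) ≤
            ENNReal.ofReal (K * δ ^ (a * p))) →
        (∫⁻ ω, ⨆ t ∈ Icc (0 : ℝ) T, ENNReal.ofReal (‖X ω t - Z ω t‖ ^ p)) ^ (1 / p) ≤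
          ENNReal.ofReal (C * K ^ (1 / p) * δ ^ (a - ε)) := by
  obtain ⟨ha0, ha1⟩ := ha
  obtain ⟨hε1, hε2⟩ := hε
  have hp0 : 0 < p := lt_trans (by positivity) hp
  have hp1 : 1 < p := lt_of_le_of_lt (one_le_one_div ha0 ha1) hp
  have hpinv : 0 < 1 / p := by positivity
  have hεa : 1 / p < a := lt_trans hε1 hε2
  set r : ℝ := 2 ^ (1 / p - a) with hr_def
  have hr0 : 0 < r := Real.rpow_pos_of_pos two_pos _
  have hr1 : r < 1 := Real.rpow_lt_one_of_one_lt_of_neg one_lt_two (by linarith)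
  set c1 : ℝ := 2 ^ ((p + 1) / p) with hc1_def
  have hc1 : 0 < c1 := Real.rpow_pos_of_pos two_pos _
  have hTa : 0 < T ^ a := Real.rpow_pos_of_pos hT _
  have h8 : (0:ℝ) < 8 ^ (1/p) := Real.rpow_pos_of_pos (by norm_num) _
  have hrinv : (0:ℝ) < (1 - r)⁻¹ := by apply inv_pos.2; linarith
  set C : ℝ := 8 ^ (1 / p) + c1 * T ^ a * (1 - r)⁻¹ + 1 with hC_def
  have hC : 0 < C := by
    have h1 : 0 < c1 * T ^ a * (1 - r)⁻¹ := by positivity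
    positivity
  refine ⟨C, hC, ?_⟩
  intro Ω _ _ X Z K δ hK hδ hXc hZc hXm hZm hX hZ hXZ
  obtain ⟨hδ0, hδ1⟩ := hδ
  -- choice of N
  set N : ℕ := Nat.clog 2 ⌈1 / δ⌉₊ with hN_def
  have hN1 : 1 / δ ≤ (2:ℝ) ^ N := by
    refine le_trans (Nat.le_ceil _) ?_
    have h := Nat.le_pow_clog one_lt_two ⌈1 / δ⌉₊
    exact_mod_cast h
  have hN2 : (2:ℝ) ^ N ≤ 4 / δ := by
    rcases lt_or_ge ⌈1 / δ⌉₊ 2 with hc | hc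
    · have hN0 : N = 0 := by
        have h01 : ⌈1 / δ⌉₊ = 0 ∨ ⌈1 / δ⌉₊ = 1 := by omega
        rcases h01 with h | h <;> rw [hN_def, h] <;> simp
      rw [hN0, pow_zero, le_div_iff₀ hδ0]
      linarith
    · have hlt : 2 ^ (N - 1) < ⌈1 / δ⌉₊ := Nat.pow_pred_clog_lt_self one_lt_two hc
      have hNpos : 0 < N := Nat.clog_pos one_lt_two hc
      have hceil : (⌈1 / δ⌉₊ : ℝ) < 1 / δ + 1 := Nat.ceil_lt_add_one (by positivity)
      have h1d : (1:ℝ) ≤ 1 / δ := one_le_one_div hδ0 hδ1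
      have h2N1 : ((2:ℝ)) ^ (N - 1) < 1 / δ + 1 := by
        calc ((2:ℝ)) ^ (N - 1) = ((2 ^ (N-1) : ℕ) : ℝ) := by push_cast; ring
          _ < (⌈1 / δ⌉₊ : ℝ) := by exact_mod_cast hlt
          _ < 1 / δ + 1 := hceil
      have hNe : N - 1 + 1 = N := by omega
      have hsplit : (2:ℝ) ^ N = 2 * 2 ^ (N - 1) := by
        nth_rewrite 1 [← hNe]
        rw [pow_succ']
      rw [hsplit]
      have h3 : (2:ℝ) ^ (N - 1) ≤ 2 * (1/δ) := by linarith
      calc 2 * (2:ℝ) ^ (N-1) ≤ 2 * (2 * (1/δ)) := by linarith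
        _ = 4 / δ := by ring
  have h2Npos : (0:ℝ) < (2:ℝ) ^ N := by positivity
  have h2Ninv : ((2:ℝ) ^ N)⁻¹ ≤ δ := by
    rw [one_div] at hN1
    calc ((2:ℝ)^N)⁻¹ ≤ (δ⁻¹)⁻¹ := by
          apply inv_anti₀ (by positivity) hN1
      _ = δ := inv_inv δ
  -- key real bounds
  have key1 : δ ^ (a - 1/p) ≤ δ ^ (a - ε) :=
    Real.rpow_le_rpow_of_exponent_ge hδ0 hδ1 (by linarith)
  have key2 : r ^ (N + 1) ≤ δ ^ (a - 1/p) := by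
    have e : r ^ (N+1) ≤ r ^ N := pow_le_pow_of_le_one hr0.le hr1.le (Nat.le_succ N)
    have e2 : r ^ N = (((2:ℝ)^N)⁻¹) ^ (a - 1/p) := by
      have h1 : (((2:ℝ)^N)⁻¹) = (2:ℝ) ^ (-(N:ℝ)) := by
        rw [Real.rpow_neg (by norm_num), Real.rpow_natCast]
      rw [h1, ← Real.rpow_natCast r N, hr_def,
        ← Real.rpow_mul (by norm_num : (0:ℝ) ≤ 2),
        ← Real.rpow_mul (by norm_num : (0:ℝ) ≤ 2)]
      congr 1; ring
    have e3 : (((2:ℝ)^N)⁻¹) ^ (a - 1/p) ≤ δ ^ (a - 1/p) :=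
      Real.rpow_le_rpow (by positivity) h2Ninv (by linarith)
    calc r ^ (N+1) ≤ r ^ N := e
      _ = (((2:ℝ)^N)⁻¹) ^ (a - 1/p) := e2
      _ ≤ δ ^ (a - 1/p) := e3
  -- measurability
  have hDm : ∀ t : ℝ, Measurable fun ω => X ω t - Z ω t := fun t => (hXm t).sub (hZm t)
  -- grid points
  have hgrid_mem : ∀ (n : ℕ) (k : ℕ), k ≤ 2 ^ n → ((k:ℝ) * T / 2 ^ n) ∈ Icc (0:ℝ) T := by
    intro n k hk
    constructor
    · positivity
    · rw [div_le_iff₀ (by positivity)]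
      have hkr : (k:ℝ) ≤ 2 ^ n := by exact_mod_cast hk
      nlinarith [pow_pos (two_pos (α := ℝ)) n]
  -- the functions
  set f0 : Ω → ENNReal := fun ω => ⨆ k ∈ Finset.range (2 ^ N + 1),
    ENNReal.ofReal ‖X ω ((k:ℝ) * T / 2 ^ N) - Z ω ((k:ℝ) * T / 2 ^ N)‖ with hf0_def
  set fs : ℕ → Ω → ENNReal := fun m ω => ⨆ k ∈ Finset.range (2 ^ (N + 1 + m)),
    ENNReal.ofReal ‖(X ω (((k:ℝ)+1) * T / 2 ^ (N+1+m)) - Z ω (((k:ℝ)+1) * T / 2 ^ (N+1+m))) -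
      (X ω ((k:ℝ) * T / 2 ^ (N+1+m)) - Z ω ((k:ℝ) * T / 2 ^ (N+1+m)))‖ with hfs_def
  have hf0m : Measurable f0 := by
    apply Measurable.iSup; intro k; apply Measurable.iSup; intro _
    exact ((hDm _).norm).ennreal_ofReal
  have hfsm : ∀ m, Measurable (fs m) := by
    intro m
    apply Measurable.iSup; intro k; apply Measurable.iSup; intro _
    exact (((hDm _).sub (hDm _)).norm).ennreal_ofReal
  -- pointwise chaining bound
  have hpoint : ∀ ω, (⨆ t ∈ Icc (0:ℝ) T, ENNReal.ofReal (‖X ω t - Z ω t‖ ^ p)) ≤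
      (f0 ω + ∑' m, fs m ω) ^ p := by
    intro ω
    refine iSup₂_le fun t ht => ?_
    have hch := my_chaining hT (fun s => X ω s - Z ω s) ((hXc ω).sub (hZc ω)) N ht
    have he : ENNReal.ofReal (‖X ω t - Z ω t‖ ^ p) = ENNReal.ofReal ‖X ω t - Z ω t‖ ^ p :=
      (ENNReal.ofReal_rpow_of_nonneg (norm_nonneg _) hp0.le).symm
    rw [he]
    exact ENNReal.rpow_le_rpow hch hp0.le
  -- bound for f0
  have hb0 : (∫⁻ ω, f0 ω ^ p) ^ (1/p) ≤
      ENNReal.ofReal (8 ^ (1/p) * (K ^ (1/p) * δ ^ (a - 1/p))) := by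
    have step1 : (∫⁻ ω, f0 ω ^ p) ≤ (2 ^ N + 1 : ℕ) • ENNReal.ofReal (K * δ ^ (a * p)) := by
      calc (∫⁻ ω, f0 ω ^ p)
          ≤ ∫⁻ ω, ∑ k ∈ Finset.range (2 ^ N + 1),
              ENNReal.ofReal ‖X ω ((k:ℝ) * T / 2 ^ N) - Z ω ((k:ℝ) * T / 2 ^ N)‖ ^ p :=
            lintegral_mono fun ω => my_sup_pow_le_sum _ hp0
        _ = ∑ k ∈ Finset.range (2 ^ N + 1), ∫⁻ ω,
              ENNReal.ofReal ‖X ω ((k:ℝ) * T / 2 ^ N) - Z ω ((k:ℝ) * T / 2 ^ N)‖ ^ p :=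
            lintegral_finset_sum' _ (fun k _ =>
              (((hDm _).norm.ennreal_ofReal).pow_const p).aemeasurable)
        _ ≤ (Finset.range (2 ^ N + 1)).card • ENNReal.ofReal (K * δ ^ (a * p)) := by
            refine Finset.sum_le_card_nsmul _ _ _ fun k hk => ?_
            have hmem := hgrid_mem N k (Nat.lt_succ_iff.1 (Finset.mem_range.1 hk))
            refine le_trans (le_of_eq (lintegral_congr fun ω => ?_)) (hXZ _ hmem)
            exact ENNReal.ofReal_rpow_of_nonneg (norm_nonneg _) hp0.le
        _ = (2 ^ N + 1 : ℕ) • ENNReal.ofReal (K * δ ^ (a * p)) := by rw [Finset.card_range]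
    have step2 : (2 ^ N + 1 : ℕ) • ENNReal.ofReal (K * δ ^ (a * p)) =
        ENNReal.ofReal (((2 ^ N + 1 : ℕ) : ℝ) * (K * δ ^ (a * p))) := by
      rw [ENNReal.ofReal_mul (show (0:ℝ) ≤ ((2 ^ N + 1 : ℕ) : ℝ) by positivity),
        ENNReal.ofReal_natCast, nsmul_eq_mul]
    have hreal0 : (((2 ^ N + 1 : ℕ) : ℝ) * (K * δ ^ (a * p))) ^ (1/p) ≤
        8 ^ (1/p) * (K ^ (1/p) * δ ^ (a - 1/p)) := by
      have h2N8 : ((2 ^ N + 1 : ℕ) : ℝ) ≤ 8 / δ := by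
        push_cast
        have h1 : (1:ℝ) ≤ 2 ^ N := one_le_pow₀ (by norm_num)
        have h2 : (8:ℝ)/δ = 2 * (4/δ) := by ring
        linarith
      have hstep : (((2 ^ N + 1 : ℕ) : ℝ) * (K * δ ^ (a * p))) ≤ (8/δ) * (K * δ ^ (a * p)) :=
        mul_le_mul_of_nonneg_right h2N8 (by positivity)
      refine le_trans (Real.rpow_le_rpow (by positivity) hstep hpinv.le) (le_of_eq ?_)
      have e : (8/δ) * (K * δ ^ (a * p)) = 8 * K * δ ^ (a * p - 1) := by
        rw [Real.rpow_sub hδ0, Real.rpow_one]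
        field_simp
      rw [e, Real.mul_rpow (by positivity) (Real.rpow_nonneg hδ0.le _),
        Real.mul_rpow (by norm_num) hK, ← Real.rpow_mul hδ0.le]
      have e2 : (a * p - 1) * (1/p) = a - 1/p := by field_simp
      rw [e2, mul_assoc]
    calc (∫⁻ ω, f0 ω ^ p) ^ (1/p)
        ≤ ((2 ^ N + 1 : ℕ) • ENNReal.ofReal (K * δ ^ (a * p))) ^ (1/p) :=
          ENNReal.rpow_le_rpow step1 hpinv.le
      _ = ENNReal.ofReal ((((2 ^ N + 1 : ℕ) : ℝ) * (K * δ ^ (a * p))) ^ (1/p)) := by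
          rw [step2, ← ENNReal.ofReal_rpow_of_nonneg (by positivity) hpinv.le]
      _ ≤ _ := ENNReal.ofReal_le_ofReal hreal0
  -- bound for fs m
  have hb1 : ∀ m : ℕ, (∫⁻ ω, fs m ω ^ p) ^ (1/p) ≤
      ENNReal.ofReal ((c1 * K ^ (1/p) * T ^ a * r ^ (N+1)) * r ^ m) := by
    intro m
    set n : ℕ := N + 1 + m with hn_def
    have key : ∀ k ∈ Finset.range (2 ^ n),
        (∫⁻ ω, ENNReal.ofReal ‖(X ω (((k:ℝ)+1) * T / 2 ^ n) - Z ω (((k:ℝ)+1) * T / 2 ^ n)) -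
            (X ω ((k:ℝ) * T / 2 ^ n) - Z ω ((k:ℝ) * T / 2 ^ n))‖ ^ p)
          ≤ ENNReal.ofReal ((2:ℝ) ^ (p+1) * (K * (T / 2 ^ n) ^ (a*p))) := by
      intro k hk
      have hklt := Finset.mem_range.1 hk
      have hm1 : ((k:ℝ) * T / 2 ^ n) ∈ Icc (0:ℝ) T := hgrid_mem n k hklt.le
      have hm2 : (((k:ℝ)+1) * T / 2 ^ n) ∈ Icc (0:ℝ) T := by
        have h := hgrid_mem n (k+1) hklt
        rw [show (((k+1:ℕ)):ℝ) = (k:ℝ)+1 by push_cast; ring] at h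
        exact h
      have habs : |(((k:ℝ)+1) * T / 2 ^ n) - ((k:ℝ) * T / 2 ^ n)| = T / 2 ^ n := by
        have hsub : (((k:ℝ)+1) * T / 2 ^ n) - ((k:ℝ) * T / 2 ^ n) = T / 2 ^ n := by
          field_simp
          ring
        rw [hsub, abs_of_nonneg (by positivity)]
      have hpw : ∀ ω, ENNReal.ofReal
            ‖(X ω (((k:ℝ)+1) * T / 2 ^ n) - Z ω (((k:ℝ)+1) * T / 2 ^ n)) -
              (X ω ((k:ℝ) * T / 2 ^ n) - Z ω ((k:ℝ) * T / 2 ^ n))‖ ^ p ≤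
          ENNReal.ofReal ((2:ℝ)^p) *
            (ENNReal.ofReal (‖X ω (((k:ℝ)+1) * T / 2 ^ n) - X ω ((k:ℝ) * T / 2 ^ n)‖ ^ p) +
             ENNReal.ofReal (‖Z ω (((k:ℝ)+1) * T / 2 ^ n) - Z ω ((k:ℝ) * T / 2 ^ n)‖ ^ p)) := by
        intro ω
        rw [ENNReal.ofReal_rpow_of_nonneg (norm_nonneg _) hp0.le,
          ← ENNReal.ofReal_add (by positivity) (by positivity),
          ← ENNReal.ofReal_mul (by positivity)]
        apply ENNReal.ofReal_le_ofReal
        have tri : ‖(X ω (((k:ℝ)+1) * T / 2 ^ n) - Z ω (((k:ℝ)+1) * T / 2 ^ n)) -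
              (X ω ((k:ℝ) * T / 2 ^ n) - Z ω ((k:ℝ) * T / 2 ^ n))‖ ≤
            ‖X ω (((k:ℝ)+1) * T / 2 ^ n) - X ω ((k:ℝ) * T / 2 ^ n)‖ +
            ‖Z ω (((k:ℝ)+1) * T / 2 ^ n) - Z ω ((k:ℝ) * T / 2 ^ n)‖ := by
          have e : (X ω (((k:ℝ)+1) * T / 2 ^ n) - Z ω (((k:ℝ)+1) * T / 2 ^ n)) -
              (X ω ((k:ℝ) * T / 2 ^ n) - Z ω ((k:ℝ) * T / 2 ^ n)) =
              (X ω (((k:ℝ)+1) * T / 2 ^ n) - X ω ((k:ℝ) * T / 2 ^ n)) -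
              (Z ω (((k:ℝ)+1) * T / 2 ^ n) - Z ω ((k:ℝ) * T / 2 ^ n)) := by abel
          rw [e]
          exact norm_sub_le _ _
        calc ‖_‖ ^ p ≤ (‖X ω (((k:ℝ)+1) * T / 2 ^ n) - X ω ((k:ℝ) * T / 2 ^ n)‖ +
              ‖Z ω (((k:ℝ)+1) * T / 2 ^ n) - Z ω ((k:ℝ) * T / 2 ^ n)‖) ^ p :=
            Real.rpow_le_rpow (norm_nonneg _) tri hp0.le
          _ ≤ _ := my_real_pow_add (norm_nonneg _) (norm_nonneg _) hp0.le
      have hXmeas : Measurable fun ω =>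
          ENNReal.ofReal (‖X ω (((k:ℝ)+1) * T / 2 ^ n) - X ω ((k:ℝ) * T / 2 ^ n)‖ ^ p) :=
        ((((hXm _).sub (hXm _)).norm).pow_const p).ennreal_ofReal
      have hZmeas : Measurable fun ω =>
          ENNReal.ofReal (‖Z ω (((k:ℝ)+1) * T / 2 ^ n) - Z ω ((k:ℝ) * T / 2 ^ n)‖ ^ p) :=
        ((((hZm _).sub (hZm _)).norm).pow_const p).ennreal_ofReal
      calc (∫⁻ ω, ENNReal.ofReal ‖(X ω (((k:ℝ)+1) * T / 2 ^ n) - Z ω (((k:ℝ)+1) * T / 2 ^ n)) -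
            (X ω ((k:ℝ) * T / 2 ^ n) - Z ω ((k:ℝ) * T / 2 ^ n))‖ ^ p)
          ≤ ∫⁻ ω, ENNReal.ofReal ((2:ℝ)^p) *
            (ENNReal.ofReal (‖X ω (((k:ℝ)+1) * T / 2 ^ n) - X ω ((k:ℝ) * T / 2 ^ n)‖ ^ p) +
             ENNReal.ofReal (‖Z ω (((k:ℝ)+1) * T / 2 ^ n) - Z ω ((k:ℝ) * T / 2 ^ n)‖ ^ p)) :=
            lintegral_mono hpw
        _ = ENNReal.ofReal ((2:ℝ)^p) *
            ((∫⁻ ω, ENNReal.ofReal (‖X ω (((k:ℝ)+1) * T / 2 ^ n) - X ω ((k:ℝ) * T / 2 ^ n)‖ ^ p)) +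
             ∫⁻ ω, ENNReal.ofReal (‖Z ω (((k:ℝ)+1) * T / 2 ^ n) - Z ω ((k:ℝ) * T / 2 ^ n)‖ ^ p)) := by
            rw [lintegral_const_mul _ (hXmeas.add hZmeas : Measurable fun ω => _ + _), lintegral_add_left hXmeas]
        _ ≤ ENNReal.ofReal ((2:ℝ)^p) *
            (ENNReal.ofReal (K * |(((k:ℝ)+1) * T / 2 ^ n) - ((k:ℝ) * T / 2 ^ n)| ^ (a*p)) +
             ENNReal.ofReal (K * |(((k:ℝ)+1) * T / 2 ^ n) - ((k:ℝ) * T / 2 ^ n)| ^ (a*p))) := by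
            gcongr
            · exact hX _ hm1 _ hm2
            · exact hZ _ hm1 _ hm2
        _ = ENNReal.ofReal ((2:ℝ) ^ (p+1) * (K * (T / 2 ^ n) ^ (a*p))) := by
            rw [habs, ← ENNReal.ofReal_add (by positivity) (by positivity),
              ← ENNReal.ofReal_mul (by positivity)]
            congr 1
            rw [show (2:ℝ)^(p+1) = 2^p * 2 by rw [Real.rpow_add two_pos, Real.rpow_one]]
            ring
    have step1 : (∫⁻ ω, fs m ω ^ p) ≤
        (2 ^ n : ℕ) • ENNReal.ofReal ((2:ℝ) ^ (p+1) * (K * (T / 2 ^ n) ^ (a*p))) := by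
      calc (∫⁻ ω, fs m ω ^ p)
          ≤ ∫⁻ ω, ∑ k ∈ Finset.range (2 ^ n),
              ENNReal.ofReal ‖(X ω (((k:ℝ)+1) * T / 2 ^ n) - Z ω (((k:ℝ)+1) * T / 2 ^ n)) -
                (X ω ((k:ℝ) * T / 2 ^ n) - Z ω ((k:ℝ) * T / 2 ^ n))‖ ^ p :=
            lintegral_mono fun ω => my_sup_pow_le_sum _ hp0
        _ = ∑ k ∈ Finset.range (2 ^ n), ∫⁻ ω,
              ENNReal.ofReal ‖(X ω (((k:ℝ)+1) * T / 2 ^ n) - Z ω (((k:ℝ)+1) * T / 2 ^ n)) -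
                (X ω ((k:ℝ) * T / 2 ^ n) - Z ω ((k:ℝ) * T / 2 ^ n))‖ ^ p :=
            lintegral_finset_sum' _ (fun k _ =>
              (((((hDm _).sub (hDm _)).norm).ennreal_ofReal).pow_const p).aemeasurable)
        _ ≤ (Finset.range (2 ^ n)).card •
              ENNReal.ofReal ((2:ℝ) ^ (p+1) * (K * (T / 2 ^ n) ^ (a*p))) :=
            Finset.sum_le_card_nsmul _ _ _ key
        _ = _ := by rw [Finset.card_range]
    have step2 : (2 ^ n : ℕ) • ENNReal.ofReal ((2:ℝ) ^ (p+1) * (K * (T / 2 ^ n) ^ (a*p))) =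
        ENNReal.ofReal (((2 ^ n : ℕ) : ℝ) * ((2:ℝ) ^ (p+1) * (K * (T / 2 ^ n) ^ (a*p)))) := by
      rw [ENNReal.ofReal_mul (show (0:ℝ) ≤ ((2 ^ n : ℕ) : ℝ) by positivity),
        ENNReal.ofReal_natCast, nsmul_eq_mul]
    have hreal1 : (((2 ^ n : ℕ) : ℝ) * ((2:ℝ) ^ (p+1) * (K * (T / 2 ^ n) ^ (a*p)))) ^ (1/p) =
        (c1 * K ^ (1/p) * T ^ a * r ^ (N+1)) * r ^ m := by
      have hre : (((2 ^ n : ℕ) : ℝ) * ((2:ℝ) ^ (p+1) * (K * (T / 2 ^ n) ^ (a*p)))) =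
          K * ((2:ℝ) ^ n * ((2:ℝ) ^ (p+1) * (T / 2 ^ n) ^ (a*p))) := by
        push_cast
        ring
      rw [hre, Real.mul_rpow hK (by positivity), my_term_calc hT ha0 hp0 n, ← hr_def, ← hc1_def]
      rw [hn_def, pow_add, pow_add]
      ring
    calc (∫⁻ ω, fs m ω ^ p) ^ (1/p)
        ≤ ((2 ^ n : ℕ) •
            ENNReal.ofReal ((2:ℝ) ^ (p+1) * (K * (T / 2 ^ n) ^ (a*p)))) ^ (1/p) :=
          ENNReal.rpow_le_rpow step1 hpinv.le
      _ = ENNReal.ofReal ((((2 ^ n : ℕ) : ℝ) * ((2:ℝ) ^ (p+1) * (K * (T / 2 ^ n) ^ (a*p)))) ^ (1/p)) := by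
          rw [step2, ← ENNReal.ofReal_rpow_of_nonneg (by positivity) hpinv.le]
      _ = _ := by rw [hreal1]
  -- final assembly
  have hsum : ∑' m, ENNReal.ofReal ((c1 * K ^ (1/p) * T ^ a * r ^ (N+1)) * r ^ m) =
      ENNReal.ofReal ((c1 * K ^ (1/p) * T ^ a * r ^ (N+1)) * (1 - r)⁻¹) := by
    rw [← ENNReal.ofReal_tsum_of_nonneg (fun m => by positivity)
        ((summable_geometric_of_lt_one hr0.le hr1).mul_left _)]
    rw [tsum_mul_left, tsum_geometric_of_lt_one hr0.le hr1]
  have hfinal : 8 ^ (1/p) * (K ^ (1/p) * δ ^ (a - 1/p)) +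
      (c1 * K ^ (1/p) * T ^ a * r ^ (N+1)) * (1 - r)⁻¹ ≤ C * K ^ (1/p) * δ ^ (a - ε) := by
    have hKp : (0:ℝ) ≤ K ^ (1/p) := Real.rpow_nonneg hK _
    have hδε : (0:ℝ) ≤ δ ^ (a - ε) := by positivity
    have h1 : 8 ^ (1/p) * (K ^ (1/p) * δ ^ (a - 1/p)) ≤
        8 ^ (1/p) * (K ^ (1/p) * δ ^ (a - ε)) := by
      apply mul_le_mul_of_nonneg_left _ h8.le
      exact mul_le_mul_of_nonneg_left (key1) hKp
    have h2 : (c1 * K ^ (1/p) * T ^ a * r ^ (N+1)) * (1 - r)⁻¹ ≤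
        (c1 * K ^ (1/p) * T ^ a * δ ^ (a - ε)) * (1 - r)⁻¹ := by
      apply mul_le_mul_of_nonneg_right _ hrinv.le
      apply mul_le_mul_of_nonneg_left _ (by positivity)
      exact key2.trans key1
    calc 8 ^ (1/p) * (K ^ (1/p) * δ ^ (a - 1/p)) +
          (c1 * K ^ (1/p) * T ^ a * r ^ (N+1)) * (1 - r)⁻¹
        ≤ 8 ^ (1/p) * (K ^ (1/p) * δ ^ (a - ε)) +
          (c1 * K ^ (1/p) * T ^ a * δ ^ (a - ε)) * (1 - r)⁻¹ := add_le_add h1 h2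
      _ = (8 ^ (1/p) + c1 * T ^ a * (1 - r)⁻¹) * K ^ (1/p) * δ ^ (a - ε) := by ring
      _ ≤ C * K ^ (1/p) * δ ^ (a - ε) := by
          apply mul_le_mul_of_nonneg_right _ hδε
          apply mul_le_mul_of_nonneg_right _ hKp
          rw [hC_def]
          linarith
  calc (∫⁻ ω, ⨆ t ∈ Icc (0:ℝ) T, ENNReal.ofReal (‖X ω t - Z ω t‖ ^ p)) ^ (1 / p)
      ≤ (∫⁻ ω, (f0 ω + ∑' m, fs m ω) ^ p) ^ (1 / p) :=
        ENNReal.rpow_le_rpow (lintegral_mono hpoint) hpinv.le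
    _ ≤ (∫⁻ ω, f0 ω ^ p) ^ (1 / p) + (∫⁻ ω, (∑' m, fs m ω) ^ p) ^ (1 / p) :=
        ENNReal.lintegral_Lp_add_le hf0m.aemeasurable
          (Measurable.ennreal_tsum hfsm).aemeasurable hp1.le
    _ ≤ ENNReal.ofReal (8 ^ (1/p) * (K ^ (1/p) * δ ^ (a - 1/p))) +
        ∑' m, (∫⁻ ω, fs m ω ^ p) ^ (1/p) :=
        add_le_add hb0 (my_minkowski_tsum _ hp1.le fs hfsm)
    _ ≤ ENNReal.ofReal (8 ^ (1/p) * (K ^ (1/p) * δ ^ (a - 1/p))) +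
        ∑' m, ENNReal.ofReal ((c1 * K ^ (1/p) * T ^ a * r ^ (N+1)) * r ^ m) :=
        add_le_add_right (ENNReal.tsum_le_tsum hb1) _
    _ = ENNReal.ofReal (8 ^ (1/p) * (K ^ (1/p) * δ ^ (a - 1/p)) +
        (c1 * K ^ (1/p) * T ^ a * r ^ (N+1)) * (1 - r)⁻¹) := by
        rw [hsum, ← ENNReal.ofReal_add (by positivity) (by positivity)]
    _ ≤ ENNReal.ofReal (C * K ^ (1/p) * δ ^ (a - ε)) := ENNReal.ofReal_le_ofReal hfinal
end
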